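/- The set of all (s, i) ∈ LatStr such that the lattice (ℕ, s, i) is locally finite, universal for finite lattices, and ultrahomogeneous for finite lattices is comeager in LatStr. -/

import Mathlib

set_option linter.unusedSectionVars false


/-- The set of pairs `(s, i)` of binary operations on `ℕ` that define a lattice. -/
def LatStr : Set ((ℕ → ℕ → ℕ) × (ℕ → ℕ → ℕ)) :=
  {p | (∀ a b, p.1 a b = p.1 b a) ∧ (∀ a b c, p.1 (p.1 a b) c = p.1 a (p.1 b c)) ∧
       (∀ a b, p.2 a b = p.2 b a) ∧ (∀ a b c, p.2 (p.2 a b) c = p.2 a (p.2 b c)) ∧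
       (∀ a b, p.1 a (p.2 a b) = a) ∧ (∀ a b, p.2 a (p.1 a b) = a)}

/-- The lattice `(ℕ, s, i)` is locally finite: every finite subset is contained
in a finite subset closed under both operations (a finite sublattice). -/
def LocFinStr (p : (ℕ → ℕ → ℕ) × (ℕ → ℕ → ℕ)) : Prop :=
  ∀ S : Finset ℕ, ∃ T : Finset ℕ, S ⊆ T ∧ ∀ a ∈ T, ∀ b ∈ T, p.1 a b ∈ T ∧ p.2 a b ∈ T

/-- `e` is a lattice embedding of the lattice `A` into the lattice `(ℕ, s, i)`. -/
def StrEmb (A : Type) [Lattice A] (p : (ℕ → ℕ → ℕ) × (ℕ → ℕ → ℕ)) (e : A → ℕ) : Prop :=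
  Function.Injective e ∧
    ∀ a b : A, e (a ⊔ b) = p.1 (e a) (e b) ∧ e (a ⊓ b) = p.2 (e a) (e b)

/-- The lattice `(ℕ, s, i)` is universal for finite lattices. -/
def UnivStr (p : (ℕ → ℕ → ℕ) × (ℕ → ℕ → ℕ)) : Prop :=
  ∀ (A : Type) [Fintype A] [Lattice A], ∃ e : A → ℕ, StrEmb A p e

/-- The lattice `(ℕ, s, i)` is ultrahomogeneous for finite lattices. -/
def UltraStr (p : (ℕ → ℕ → ℕ) × (ℕ → ℕ → ℕ)) : Prop :=
  ∀ (A B : Type) [Fintype A] [Lattice A] [Fintype B] [Lattice B]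
    (j : A → B) (e : A → ℕ),
    (Function.Injective j ∧ ∀ a b : A, j (a ⊔ b) = j a ⊔ j b ∧ j (a ⊓ b) = j a ⊓ j b) →
    StrEmb A p e →
    ∃ e' : B → ℕ, StrEmb B p e' ∧ e' ∘ j = e



/-- A partial lattice: a set `C` in `α` with operations and an order making it a lattice. -/
structure PL (α : Type) where
  C : Set α
  s : α → α → α
  i : α → α → α
  le : α → α → Prop
  refl : ∀ a ∈ C, le a a
  antisymm : ∀ a ∈ C, ∀ b ∈ C, le a b → le b a → a = b
  trans : ∀ a ∈ C, ∀ b ∈ C, ∀ c ∈ C, le a b → le b c → le a c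
  s_mem : ∀ a ∈ C, ∀ b ∈ C, s a b ∈ C
  i_mem : ∀ a ∈ C, ∀ b ∈ C, i a b ∈ C
  le_s_left : ∀ a ∈ C, ∀ b ∈ C, le a (s a b)
  le_s_right : ∀ a ∈ C, ∀ b ∈ C, le b (s a b)
  s_le : ∀ a ∈ C, ∀ b ∈ C, ∀ c ∈ C, le a c → le b c → le (s a b) c
  i_le_left : ∀ a ∈ C, ∀ b ∈ C, le (i a b) a
  i_le_right : ∀ a ∈ C, ∀ b ∈ C, le (i a b) b
  le_i : ∀ a ∈ C, ∀ b ∈ C, ∀ c ∈ C, le c a → le c b → le c (i a b)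

namespace PL

variable {α : Type} (M : PL α) {a b c : α}

lemma s_comm (ha : a ∈ M.C) (hb : b ∈ M.C) : M.s a b = M.s b a :=
  M.antisymm _ (M.s_mem _ ha _ hb) _ (M.s_mem _ hb _ ha)
    (M.s_le _ ha _ hb _ (M.s_mem _ hb _ ha) (M.le_s_right _ hb _ ha) (M.le_s_left _ hb _ ha))
    (M.s_le _ hb _ ha _ (M.s_mem _ ha _ hb) (M.le_s_right _ ha _ hb) (M.le_s_left _ ha _ hb))

lemma i_comm (ha : a ∈ M.C) (hb : b ∈ M.C) : M.i a b = M.i b a :=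
  M.antisymm _ (M.i_mem _ ha _ hb) _ (M.i_mem _ hb _ ha)
    (M.le_i _ hb _ ha _ (M.i_mem _ ha _ hb) (M.i_le_right _ ha _ hb) (M.i_le_left _ ha _ hb))
    (M.le_i _ ha _ hb _ (M.i_mem _ hb _ ha) (M.i_le_right _ hb _ ha) (M.i_le_left _ hb _ ha))

lemma s_assoc (ha : a ∈ M.C) (hb : b ∈ M.C) (hc : c ∈ M.C) :
    M.s (M.s a b) c = M.s a (M.s b c) := by
  have hab := M.s_mem _ ha _ hb
  have hbc := M.s_mem _ hb _ hc
  have h1 : M.s (M.s a b) c ∈ M.C := M.s_mem _ hab _ hc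
  have h2 : M.s a (M.s b c) ∈ M.C := M.s_mem _ ha _ hbc
  refine M.antisymm _ h1 _ h2 ?_ ?_
  · refine M.s_le _ hab _ hc _ h2 ?_ ?_
    · refine M.s_le _ ha _ hb _ h2 (M.le_s_left _ ha _ hbc) ?_
      exact M.trans _ hb _ hbc _ h2 (M.le_s_left _ hb _ hc) (M.le_s_right _ ha _ hbc)
    · exact M.trans _ hc _ hbc _ h2 (M.le_s_right _ hb _ hc) (M.le_s_right _ ha _ hbc)
  · refine M.s_le _ ha _ hbc _ h1 ?_ ?_
    · exact M.trans _ ha _ hab _ h1 (M.le_s_left _ ha _ hb) (M.le_s_left _ hab _ hc)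
    · refine M.s_le _ hb _ hc _ h1 ?_ (M.le_s_right _ hab _ hc)
      exact M.trans _ hb _ hab _ h1 (M.le_s_right _ ha _ hb) (M.le_s_left _ hab _ hc)

lemma i_assoc (ha : a ∈ M.C) (hb : b ∈ M.C) (hc : c ∈ M.C) :
    M.i (M.i a b) c = M.i a (M.i b c) := by
  have hab := M.i_mem _ ha _ hb
  have hbc := M.i_mem _ hb _ hc
  have h1 : M.i (M.i a b) c ∈ M.C := M.i_mem _ hab _ hc
  have h2 : M.i a (M.i b c) ∈ M.C := M.i_mem _ ha _ hbc
  refine M.antisymm _ h1 _ h2 ?_ ?_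
  · refine M.le_i _ ha _ hbc _ h1 ?_ ?_
    · exact M.trans _ h1 _ hab _ ha (M.i_le_left _ hab _ hc) (M.i_le_left _ ha _ hb)
    · refine M.le_i _ hb _ hc _ h1 ?_ (M.i_le_right _ hab _ hc)
      exact M.trans _ h1 _ hab _ hb (M.i_le_left _ hab _ hc) (M.i_le_right _ ha _ hb)
  · refine M.le_i _ hab _ hc _ h2 ?_ ?_
    · refine M.le_i _ ha _ hb _ h2 (M.i_le_left _ ha _ hbc) ?_
      exact M.trans _ h2 _ hbc _ hb (M.i_le_right _ ha _ hbc) (M.i_le_left _ hb _ hc)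
    · exact M.trans _ h2 _ hbc _ hc (M.i_le_right _ ha _ hbc) (M.i_le_right _ hb _ hc)

lemma absorb_si (ha : a ∈ M.C) (hb : b ∈ M.C) : M.s a (M.i a b) = a := by
  have hi := M.i_mem _ ha _ hb
  refine M.antisymm _ (M.s_mem _ ha _ hi) _ ha ?_ (M.le_s_left _ ha _ hi)
  exact M.s_le _ ha _ hi _ ha (M.refl _ ha) (M.i_le_left _ ha _ hb)

lemma absorb_is (ha : a ∈ M.C) (hb : b ∈ M.C) : M.i a (M.s a b) = a := by
  have hs := M.s_mem _ ha _ hb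
  refine M.antisymm _ (M.i_mem _ ha _ hs) _ ha (M.i_le_left _ ha _ hs) ?_
  exact M.le_i _ ha _ hs _ ha (M.refl _ ha) (M.le_s_left _ ha _ hb)

lemma s_idem (ha : a ∈ M.C) : M.s a a = a :=
  M.antisymm _ (M.s_mem _ ha _ ha) _ ha
    (M.s_le _ ha _ ha _ ha (M.refl _ ha) (M.refl _ ha)) (M.le_s_left _ ha _ ha)

lemma i_idem (ha : a ∈ M.C) : M.i a a = a :=
  M.antisymm _ (M.i_mem _ ha _ ha) _ ha (M.i_le_left _ ha _ ha)
    (M.le_i _ ha _ ha _ ha (M.refl _ ha) (M.refl _ ha))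

lemma le_iff_s (ha : a ∈ M.C) (hb : b ∈ M.C) : M.le a b ↔ M.s a b = b := by
  constructor
  · intro h
    exact M.antisymm _ (M.s_mem _ ha _ hb) _ hb
      (M.s_le _ ha _ hb _ hb h (M.refl _ hb)) (M.le_s_right _ ha _ hb)
  · intro h; rw [← h]; exact M.le_s_left _ ha _ hb

lemma le_iff_i (ha : a ∈ M.C) (hb : b ∈ M.C) : M.le a b ↔ M.i a b = a := by
  constructor
  · intro h
    exact M.antisymm _ (M.i_mem _ ha _ hb) _ ha (M.i_le_left _ ha _ hb)
      (M.le_i _ ha _ hb _ ha (M.refl _ ha) h)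
  · intro h; rw [← h]; exact M.i_le_right _ ha _ hb

lemma s_mono (ha : a ∈ M.C) (hb : b ∈ M.C) {a' b' : α} (ha' : a' ∈ M.C) (hb' : b' ∈ M.C)
    (h1 : M.le a a') (h2 : M.le b b') : M.le (M.s a b) (M.s a' b') := by
  have h := M.s_mem _ ha' _ hb'
  exact M.s_le _ ha _ hb _ h (M.trans _ ha _ ha' _ h h1 (M.le_s_left _ ha' _ hb'))
    (M.trans _ hb _ hb' _ h h2 (M.le_s_right _ ha' _ hb'))

lemma i_mono (ha : a ∈ M.C) (hb : b ∈ M.C) {a' b' : α} (ha' : a' ∈ M.C) (hb' : b' ∈ M.C)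
    (h1 : M.le a a') (h2 : M.le b b') : M.le (M.i a b) (M.i a' b') := by
  have h := M.i_mem _ ha _ hb
  exact M.le_i _ ha' _ hb' _ h (M.trans _ h _ ha _ ha' (M.i_le_left _ ha _ hb) h1)
    (M.trans _ h _ hb _ hb' (M.i_le_right _ ha _ hb) h2)

end PL

namespace PL

/-- Build a partial lattice from operations satisfying the lattice identities on `C`. -/
def ofIdent {α : Type} (C : Set α) (s i : α → α → α)
    (s_mem : ∀ a ∈ C, ∀ b ∈ C, s a b ∈ C) (i_mem : ∀ a ∈ C, ∀ b ∈ C, i a b ∈ C)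
    (cs : ∀ a ∈ C, ∀ b ∈ C, s a b = s b a)
    (as_ : ∀ a ∈ C, ∀ b ∈ C, ∀ c ∈ C, s (s a b) c = s a (s b c))
    (ci : ∀ a ∈ C, ∀ b ∈ C, i a b = i b a)
    (ai : ∀ a ∈ C, ∀ b ∈ C, ∀ c ∈ C, i (i a b) c = i a (i b c))
    (ab1 : ∀ a ∈ C, ∀ b ∈ C, s a (i a b) = a)
    (ab2 : ∀ a ∈ C, ∀ b ∈ C, i a (s a b) = a) : PL α := by
  have idem_s : ∀ a ∈ C, s a a = a := by
    intro a ha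
    have h1 := ab1 a ha (s a a) (s_mem a ha a ha)
    have h2 := ab2 a ha a ha
    rw [h2] at h1; exact h1
  have link1 : ∀ a ∈ C, ∀ b ∈ C, s a b = b → i a b = a := by
    intro a ha b hb h
    have := ab2 a ha b hb
    rw [h] at this; exact this
  have link2 : ∀ a ∈ C, ∀ b ∈ C, i a b = a → s a b = b := by
    intro a ha b hb h
    have h1 := ab1 b hb a ha
    rw [ci b hb a ha, h] at h1
    rw [cs a ha b hb]; exact h1
  refine
  { C := C, s := s, i := i, le := fun a b => s a b = b
    refl := idem_s
    antisymm := by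
      intro a ha b hb h1 h2
      rw [← h2, cs b hb a ha, h1]
    trans := by
      intro a ha b hb c hc h1 h2
      have : s a c = s a (s b c) := by rw [h2]
      rw [← as_ a ha b hb c hc, h1, h2] at this
      exact this.symm ▸ rfl
    s_mem := s_mem, i_mem := i_mem
    le_s_left := by
      intro a ha b hb
      show s a (s a b) = s a b
      rw [← as_ a ha a ha b hb, idem_s a ha]
    le_s_right := by
      intro a ha b hb
      show s b (s a b) = s a b
      rw [cs a ha b hb, ← as_ b hb b hb a ha, idem_s b hb]
    s_le := by
      intro a ha b hb c hc h1 h2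
      show s (s a b) c = c
      rw [as_ a ha b hb c hc, h2, h1]
    i_le_left := by
      intro a ha b hb
      show s (i a b) a = a
      rw [cs (i a b) (i_mem a ha b hb) a ha]
      exact ab1 a ha b hb
    i_le_right := by
      intro a ha b hb
      show s (i a b) b = b
      rw [cs (i a b) (i_mem a ha b hb) b hb, ci a ha b hb]
      exact ab1 b hb a ha
    le_i := by
      intro a ha b hb c hc h1 h2
      have k1 : i c a = c := link1 c hc a ha h1
      have k2 : i c b = c := link1 c hc b hb h2
      have : i c (i a b) = c := by
        rw [← ai c hc a ha b hb, k1, k2]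
      exact link2 c hc (i a b) (i_mem a ha b hb) this }

lemma ofIdent_le {α : Type} {C : Set α} {s i : α → α → α} {sm im cs as_ ci ai ab1 ab2} {a b : α} :
    (ofIdent C s i sm im cs as_ ci ai ab1 ab2).le a b ↔ s a b = b := Iff.rfl

end PL

/-- the partial lattice (on all of ℕ) coming from `q ∈ LatStr`. -/
noncomputable def LatStr.pl {q : (ℕ → ℕ → ℕ) × (ℕ → ℕ → ℕ)}
    (hq : (∀ a b, q.1 a b = q.1 b a) ∧ (∀ a b c, q.1 (q.1 a b) c = q.1 a (q.1 b c)) ∧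
       (∀ a b, q.2 a b = q.2 b a) ∧ (∀ a b c, q.2 (q.2 a b) c = q.2 a (q.2 b c)) ∧
       (∀ a b, q.1 a (q.2 a b) = a) ∧ (∀ a b, q.2 a (q.1 a b) = a)) : PL ℕ :=
  PL.ofIdent Set.univ q.1 q.2 (fun _ _ _ _ => trivial) (fun _ _ _ _ => trivial)
    (fun a _ b _ => hq.1 a b) (fun a _ b _ c _ => hq.2.1 a b c)
    (fun a _ b _ => hq.2.2.1 a b) (fun a _ b _ c _ => hq.2.2.2.1 a b c)
    (fun a _ b _ => hq.2.2.2.2.1 a b) (fun a _ b _ => hq.2.2.2.2.2 a b)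

open Classical in
/-- Join of the glued structure: `u''M.C` keeps its lattice structure, everything else
is a chain sitting on top. -/
noncomputable def gluS {α : Type} [Nonempty α] (M : PL α) (u : α → ℕ) : ℕ → ℕ → ℕ :=
  fun m n =>
    if m ∈ u '' M.C ∧ n ∈ u '' M.C then
      u (M.s (Function.invFunOn u M.C m) (Function.invFunOn u M.C n))
    else if m ∈ u '' M.C then n else if n ∈ u '' M.C then m else max m n

open Classical in
noncomputable def gluI {α : Type} [Nonempty α] (M : PL α) (u : α → ℕ) : ℕ → ℕ → ℕ :=
  fun m n =>
    if m ∈ u '' M.C ∧ n ∈ u '' M.C then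
      u (M.i (Function.invFunOn u M.C m) (Function.invFunOn u M.C n))
    else if m ∈ u '' M.C then m else if n ∈ u '' M.C then n else min m n

namespace Glue

variable {α : Type} [Nonempty α] (M : PL α) (u : α → ℕ)

local notation "R" => u '' M.C
local notation "inv" => Function.invFunOn u M.C

lemma inv_mem {m : ℕ} (hm : m ∈ R) : inv m ∈ M.C := Function.invFunOn_mem hm
lemma u_inv {m : ℕ} (hm : m ∈ R) : u (inv m) = m := Function.invFunOn_eq hm

lemma s1_RR {m n : ℕ} (hm : m ∈ R) (hn : n ∈ R) :
    gluS M u m n = u (M.s (inv m) (inv n)) := if_pos ⟨hm, hn⟩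
lemma s1_Rn {m n : ℕ} (hm : m ∈ R) (hn : n ∉ R) : gluS M u m n = n := by
  unfold gluS; rw [if_neg (fun h => hn h.2), if_pos hm]
lemma s1_nR {m n : ℕ} (hm : m ∉ R) (hn : n ∈ R) : gluS M u m n = m := by
  unfold gluS; rw [if_neg (fun h => hm h.1), if_neg hm, if_pos hn]
lemma s1_nn {m n : ℕ} (hm : m ∉ R) (hn : n ∉ R) : gluS M u m n = max m n := by
  unfold gluS; rw [if_neg (fun h => hm h.1), if_neg hm, if_neg hn]

lemma i1_RR {m n : ℕ} (hm : m ∈ R) (hn : n ∈ R) :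
    gluI M u m n = u (M.i (inv m) (inv n)) := if_pos ⟨hm, hn⟩
lemma i1_Rn {m n : ℕ} (hm : m ∈ R) (hn : n ∉ R) : gluI M u m n = m := by
  unfold gluI; rw [if_neg (fun h => hn h.2), if_pos hm]
lemma i1_nR {m n : ℕ} (hm : m ∉ R) (hn : n ∈ R) : gluI M u m n = n := by
  unfold gluI; rw [if_neg (fun h => hm h.1), if_neg hm, if_pos hn]
lemma i1_nn {m n : ℕ} (hm : m ∉ R) (hn : n ∉ R) : gluI M u m n = min m n := by
  unfold gluI; rw [if_neg (fun h => hm h.1), if_neg hm, if_neg hn]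

lemma sRR_mem {m n : ℕ} (hm : m ∈ R) (hn : n ∈ R) : gluS M u m n ∈ R := by
  rw [s1_RR M u hm hn]
  exact ⟨_, M.s_mem _ (inv_mem M u hm) _ (inv_mem M u hn), rfl⟩
lemma iRR_mem {m n : ℕ} (hm : m ∈ R) (hn : n ∈ R) : gluI M u m n ∈ R := by
  rw [i1_RR M u hm hn]
  exact ⟨_, M.i_mem _ (inv_mem M u hm) _ (inv_mem M u hn), rfl⟩

lemma max_not {m n : ℕ} (hm : m ∉ R) (hn : n ∉ R) : max m n ∉ R := by
  rcases max_choice m n with h | h <;> rw [h] <;> assumption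
lemma min_not {m n : ℕ} (hm : m ∉ R) (hn : n ∉ R) : min m n ∉ R := by
  rcases min_choice m n with h | h <;> rw [h] <;> assumption

variable (hu : Set.InjOn u M.C)
include hu

lemma inv_u {a : α} (ha : a ∈ M.C) : inv (u a) = a :=
  hu (inv_mem M u ⟨a, ha, rfl⟩) ha (u_inv M u ⟨a, ha, rfl⟩)

lemma s1_uu {a b : α} (ha : a ∈ M.C) (hb : b ∈ M.C) :
    gluS M u (u a) (u b) = u (M.s a b) := by
  rw [s1_RR M u ⟨a, ha, rfl⟩ ⟨b, hb, rfl⟩, inv_u M u hu ha, inv_u M u hu hb]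
lemma i1_uu {a b : α} (ha : a ∈ M.C) (hb : b ∈ M.C) :
    gluI M u (u a) (u b) = u (M.i a b) := by
  rw [i1_RR M u ⟨a, ha, rfl⟩ ⟨b, hb, rfl⟩, inv_u M u hu ha, inv_u M u hu hb]

lemma s1_Ru {m : ℕ} {b : α} (hm : m ∈ R) (hb : b ∈ M.C) :
    gluS M u m (u b) = u (M.s (inv m) b) := by
  rw [s1_RR M u hm ⟨b, hb, rfl⟩, inv_u M u hu hb]
lemma s1_uR {n : ℕ} {a : α} (ha : a ∈ M.C) (hn : n ∈ R) :
    gluS M u (u a) n = u (M.s a (inv n)) := by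
  rw [s1_RR M u ⟨a, ha, rfl⟩ hn, inv_u M u hu ha]
lemma i1_Ru {m : ℕ} {b : α} (hm : m ∈ R) (hb : b ∈ M.C) :
    gluI M u m (u b) = u (M.i (inv m) b) := by
  rw [i1_RR M u hm ⟨b, hb, rfl⟩, inv_u M u hu hb]
lemma i1_uR {n : ℕ} {a : α} (ha : a ∈ M.C) (hn : n ∈ R) :
    gluI M u (u a) n = u (M.i a (inv n)) := by
  rw [i1_RR M u ⟨a, ha, rfl⟩ hn, inv_u M u hu ha]

lemma comm_s : ∀ m n, gluS M u m n = gluS M u n m := by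
  intro m n
  by_cases hm : m ∈ R <;> by_cases hn : n ∈ R
  · rw [s1_RR M u hm hn, s1_RR M u hn hm,
      M.s_comm (inv_mem M u hm) (inv_mem M u hn)]
  · rw [s1_Rn M u hm hn, s1_nR M u hn hm]
  · rw [s1_nR M u hm hn, s1_Rn M u hn hm]
  · rw [s1_nn M u hm hn, s1_nn M u hn hm, Nat.max_comm]

lemma comm_i : ∀ m n, gluI M u m n = gluI M u n m := by
  intro m n
  by_cases hm : m ∈ R <;> by_cases hn : n ∈ R
  · rw [i1_RR M u hm hn, i1_RR M u hn hm,
      M.i_comm (inv_mem M u hm) (inv_mem M u hn)]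
  · rw [i1_Rn M u hm hn, i1_nR M u hn hm]
  · rw [i1_nR M u hm hn, i1_Rn M u hn hm]
  · rw [i1_nn M u hm hn, i1_nn M u hn hm, Nat.min_comm]

lemma assoc_s : ∀ m n k, gluS M u (gluS M u m n) k = gluS M u m (gluS M u n k) := by
  intro m n k
  by_cases hm : m ∈ R <;> by_cases hn : n ∈ R <;> by_cases hk : k ∈ R
  · -- RRR
    rw [s1_RR M u hm hn, s1_RR M u hn hk,
      s1_uR M u hu (M.s_mem _ (inv_mem M u hm) _ (inv_mem M u hn)) hk,
      s1_Ru M u hu hm (M.s_mem _ (inv_mem M u hn) _ (inv_mem M u hk)),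
      M.s_assoc (inv_mem M u hm) (inv_mem M u hn) (inv_mem M u hk)]
  · -- RRn
    rw [s1_Rn M u (sRR_mem M u hm hn) hk, s1_Rn M u hn hk, s1_Rn M u hm hk]
  · -- RnR
    rw [s1_Rn M u hm hn, s1_nR M u hn hk, s1_Rn M u hm hn]
  · -- Rnn
    rw [s1_Rn M u hm hn, s1_nn M u hn hk, s1_Rn M u hm (max_not M u hn hk)]
  · -- nRR
    rw [s1_nR M u hm hn, s1_nR M u hm hk, s1_nR M u hm (sRR_mem M u hn hk)]
  · -- nRn
    rw [s1_nR M u hm hn, s1_nn M u hm hk, s1_Rn M u hn hk, s1_nn M u hm hk]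
  · -- nnR
    rw [s1_nn M u hm hn, s1_nR M u (max_not M u hm hn) hk, s1_nR M u hn hk,
      s1_nn M u hm hn]
  · -- nnn
    rw [s1_nn M u hm hn, s1_nn M u hn hk, s1_nn M u (max_not M u hm hn) hk,
      s1_nn M u hm (max_not M u hn hk), Nat.max_assoc]

lemma assoc_i : ∀ m n k, gluI M u (gluI M u m n) k = gluI M u m (gluI M u n k) := by
  intro m n k
  by_cases hm : m ∈ R <;> by_cases hn : n ∈ R <;> by_cases hk : k ∈ R
  · rw [i1_RR M u hm hn, i1_RR M u hn hk,
      i1_uR M u hu (M.i_mem _ (inv_mem M u hm) _ (inv_mem M u hn)) hk,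
      i1_Ru M u hu hm (M.i_mem _ (inv_mem M u hn) _ (inv_mem M u hk)),
      M.i_assoc (inv_mem M u hm) (inv_mem M u hn) (inv_mem M u hk)]
  · -- RRn
    rw [i1_Rn M u (iRR_mem M u hm hn) hk, i1_Rn M u hn hk]
  · -- RnR
    rw [i1_Rn M u hm hn, i1_nR M u hn hk]
  · -- Rnn
    rw [i1_Rn M u hm hn, i1_nn M u hn hk, i1_Rn M u hm hk,
      i1_Rn M u hm (min_not M u hn hk)]
  · -- nRR
    rw [i1_nR M u hm hn, i1_nR M u hm (iRR_mem M u hn hk)]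
  · -- nRn
    rw [i1_nR M u hm hn, i1_Rn M u hn hk, i1_nR M u hm hn]
  · -- nnR
    rw [i1_nn M u hm hn, i1_nR M u (min_not M u hm hn) hk, i1_nR M u hn hk,
      i1_nR M u hm hk]
  · rw [i1_nn M u hm hn, i1_nn M u hn hk, i1_nn M u (min_not M u hm hn) hk,
      i1_nn M u hm (min_not M u hn hk), Nat.min_assoc]

lemma ab1 : ∀ m n, gluS M u m (gluI M u m n) = m := by
  intro m n
  by_cases hm : m ∈ R <;> by_cases hn : n ∈ R
  · rw [i1_RR M u hm hn,
      s1_Ru M u hu hm (M.i_mem _ (inv_mem M u hm) _ (inv_mem M u hn)),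
      M.absorb_si (inv_mem M u hm) (inv_mem M u hn), u_inv M u hm]
  · rw [i1_Rn M u hm hn, s1_RR M u hm hm, M.s_idem (inv_mem M u hm), u_inv M u hm]
  · rw [i1_nR M u hm hn, s1_nR M u hm hn]
  · rw [i1_nn M u hm hn, s1_nn M u hm (min_not M u hm hn)]
    omega

lemma ab2 : ∀ m n, gluI M u m (gluS M u m n) = m := by
  intro m n
  by_cases hm : m ∈ R <;> by_cases hn : n ∈ R
  · rw [s1_RR M u hm hn,
      i1_Ru M u hu hm (M.s_mem _ (inv_mem M u hm) _ (inv_mem M u hn)),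
      M.absorb_is (inv_mem M u hm) (inv_mem M u hn), u_inv M u hm]
  · rw [s1_Rn M u hm hn, i1_Rn M u hm hn]
  · rw [s1_nR M u hm hn, i1_nn M u hm hm]
    omega
  · rw [s1_nn M u hm hn, i1_nn M u hm (max_not M u hm hn)]
    omega

/-- The glued pair is a lattice structure on ℕ extending `M` (placed via `u`). -/
theorem main :
    (gluS M u, gluI M u) ∈ LatStr ∧
    (∀ a ∈ M.C, ∀ b ∈ M.C, gluS M u (u a) (u b) = u (M.s a b) ∧
      gluI M u (u a) (u b) = u (M.i a b)) ∧
    (∀ m ∈ u '' M.C, ∀ n ∈ u '' M.C, gluS M u m n ∈ u '' M.C ∧ gluI M u m n ∈ u '' M.C) := by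
  refine ⟨⟨comm_s M u hu, assoc_s M u hu, comm_i M u hu, assoc_i M u hu,
    ab1 M u hu, ab2 M u hu⟩, ?_, ?_⟩
  · exact fun a ha b hb => ⟨s1_uu M u hu ha hb, i1_uu M u hu ha hb⟩
  · exact fun m hm n hn => ⟨sRR_mem M u hm hn, iRR_mem M u hm hn⟩

end Glue


section FEP

variable {q : (ℕ → ℕ → ℕ) × (ℕ → ℕ → ℕ)} (hq : q ∈ LatStr)
include hq

/-- Any finite subset of a lattice has a finite superset closed under meets. -/
lemma meet_closure (X : Finset ℕ) :
    ∃ Y : Finset ℕ, X ⊆ Y ∧ ∀ a ∈ Y, ∀ b ∈ Y, q.2 a b ∈ Y := by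
  classical
  obtain ⟨hc1, ha1, hc2, ha2, hb1, hb2⟩ := hq
  have idem : ∀ a, q.2 a a = a :=
    fun a => (LatStr.pl ⟨hc1, ha1, hc2, ha2, hb1, hb2⟩).i_idem trivial
  induction X using Finset.induction_on with
  | empty => exact ⟨∅, le_refl _, by simp⟩
  | @insert a X _ ih =>
    obtain ⟨Y, hXY, hY⟩ := ih
    refine ⟨insert a (Y ∪ Y.image (q.2 a)), Finset.insert_subset_insert _
      (hXY.trans Finset.subset_union_left), ?_⟩
    have key : ∀ x y, q.2 (q.2 a x) (q.2 a y) = q.2 a (q.2 x y) := by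
      intro x y
      rw [ha2 a x (q.2 a y), ← ha2 x a y, hc2 x a, ha2 a x y, ← ha2 a a (q.2 x y), idem]
    have memtype : ∀ z ∈ insert a (Y ∪ Y.image (q.2 a)),
        z = a ∨ z ∈ Y ∨ ∃ y ∈ Y, z = q.2 a y := by
      intro z hz
      simp only [Finset.mem_insert, Finset.mem_union, Finset.mem_image] at hz
      rcases hz with h | h | ⟨y, hy, h⟩
      · exact Or.inl h
      · exact Or.inr (Or.inl h)
      · exact Or.inr (Or.inr ⟨y, hy, h.symm⟩)
    have memI : ∀ z, (z = a ∨ z ∈ Y ∨ ∃ y ∈ Y, z = q.2 a y) →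
        z ∈ insert a (Y ∪ Y.image (q.2 a)) := by
      intro z hz
      simp only [Finset.mem_insert, Finset.mem_union, Finset.mem_image]
      rcases hz with h | h | ⟨y, hy, h⟩
      · exact Or.inl h
      · exact Or.inr (Or.inl h)
      · exact Or.inr (Or.inr ⟨y, hy, h.symm⟩)
    intro z hz w hw
    rcases memtype z hz with h1 | h1 | ⟨y, hy, h1⟩ <;>
      rcases memtype w hw with h2 | h2 | ⟨y', hy', h2⟩
    · rw [h1, h2]; exact memI _ (Or.inl (idem a))
    · rw [h1]; exact memI _ (Or.inr (Or.inr ⟨w, h2, rfl⟩))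
    · rw [h1, h2]
      refine memI _ (Or.inr (Or.inr ⟨y', hy', ?_⟩))
      rw [← ha2 a a y', idem]
    · rw [h2]; exact memI _ (Or.inr (Or.inr ⟨z, h1, hc2 z a⟩))
    · exact memI _ (Or.inr (Or.inl (hY _ h1 _ h2)))
    · rw [h2]
      refine memI _ (Or.inr (Or.inr ⟨q.2 z y', hY _ h1 _ hy', ?_⟩))
      rw [← ha2 z a y', hc2 z a, ha2 a z y']
    · rw [h1, h2]
      refine memI _ (Or.inr (Or.inr ⟨y, hy, ?_⟩))
      rw [ha2 a y a, hc2 y a, ← ha2 a a y, idem]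
    · rw [h1]
      refine memI _ (Or.inr (Or.inr ⟨q.2 y w, hY _ hy _ h2, ?_⟩))
      rw [ha2 a y w]
    · rw [h1, h2]
      exact memI _ (Or.inr (Or.inr ⟨q.2 y y', hY _ hy _ hy', key y y'⟩))

/-- Finite embeddability: a finite subset `X` of the lattice `q` embeds into a finite
lattice `K` with all meets of `X`-elements preserved, and with joins preserved whenever
they already lie in `X`. -/
theorem FEP (X : Finset ℕ) :
    ∃ K : PL ℕ, K.C.Finite ∧ ↑X ⊆ K.C ∧
      (∀ a ∈ X, ∀ b ∈ X, K.i a b = q.2 a b) ∧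
      (∀ a ∈ X, ∀ b ∈ X, q.1 a b ∈ X → K.s a b = q.1 a b) := by
  classical
  obtain ⟨Y, hXY, hYc⟩ := meet_closure hq X
  set Q := LatStr.pl hq with hQdef
  set τ : ℕ := Y.sup id + 1 with hτdef
  have hτ : τ ∉ Y := by
    intro h
    have := Finset.le_sup (f := id) h
    simp only [id] at this
    omega
  have hneY : ∀ a ∈ Y, a ≠ τ := fun a ha h => hτ (h ▸ ha)
  set C : Finset ℕ := insert τ Y with hCdef
  have memC : ∀ {a : ℕ}, a ∈ C → a = τ ∨ a ∈ Y := fun h => Finset.mem_insert.1 h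
  have YC : ∀ {a : ℕ}, a ∈ Y → a ∈ C := fun h => Finset.mem_insert_of_mem h
  have τC : τ ∈ C := Finset.mem_insert_self _ _
  -- the order
  set cle : ℕ → ℕ → Prop := fun a b => b = τ ∨ (a ≠ τ ∧ q.1 a b = b) with hcle
  have cle_top : ∀ a, cle a τ := fun a => Or.inl rfl
  have cle_refl : ∀ a ∈ C, cle a a := by
    intro a ha
    by_cases h : a = τ
    · exact Or.inl h
    · exact Or.inr ⟨h, Q.s_idem trivial⟩
  have cle_trans : ∀ a b c, cle a b → cle b c → cle a c := by
    rintro a b c (rfl | ⟨ha, hab⟩) hbc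
    · rcases hbc with rfl | ⟨hb, _⟩
      · exact Or.inl rfl
      · exact absurd rfl hb
    · rcases hbc with rfl | ⟨hb, hbc⟩
      · exact Or.inl rfl
      · exact Or.inr ⟨ha, Q.trans _ trivial _ trivial _ trivial hab hbc⟩
  have cle_antisymm : ∀ a b, cle a b → cle b a → a = b := by
    intro a b h1 h2
    rcases h1 with h1 | ⟨ha, hab⟩
    · rcases h2 with h2 | ⟨hb, _⟩
      · rw [h1, h2]
      · exact absurd h1 hb
    · rcases h2 with h2 | ⟨_, hba⟩
      · exact absurd h2 ha
      · exact Q.antisymm _ trivial _ trivial hab hba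
  -- the meet
  set iK : ℕ → ℕ → ℕ := fun a b => if a = τ then b else if b = τ then a else q.2 a b
    with hiK
  have iK_t1 : ∀ b, iK τ b = b := by intro b; simp [hiK]
  have iK_t2 : ∀ a, iK a τ = a := by
    intro a
    by_cases h : a = τ
    · subst h; simp [hiK]
    · simp [hiK, h]
  have iK_Y : ∀ a ∈ Y, ∀ b ∈ Y, iK a b = q.2 a b := by
    intro a ha b hb
    simp only [hiK]
    rw [if_neg (hneY a ha), if_neg (hneY b hb)]
  have iK_mem : ∀ a ∈ C, ∀ b ∈ C, iK a b ∈ C := by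
    intro a ha b hb
    rcases memC ha with rfl | ha'
    · rw [iK_t1]; exact hb
    · rcases memC hb with rfl | hb'
      · rw [iK_t2]; exact YC ha'
      · rw [iK_Y a ha' b hb']; exact YC (hYc a ha' b hb')
  have iK_le_left : ∀ a ∈ C, ∀ b ∈ C, cle (iK a b) a := by
    intro a ha b hb
    rcases memC ha with rfl | ha'
    · rw [iK_t1]; exact cle_top b
    · rcases memC hb with rfl | hb'
      · rw [iK_t2]; exact cle_refl a ha
      · rw [iK_Y a ha' b hb']
        exact Or.inr ⟨hneY _ (hYc a ha' b hb'), Q.i_le_left _ trivial _ trivial⟩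
  have iK_le_right : ∀ a ∈ C, ∀ b ∈ C, cle (iK a b) b := by
    intro a ha b hb
    rcases memC ha with rfl | ha'
    · rw [iK_t1]; exact cle_refl b hb
    · rcases memC hb with rfl | hb'
      · rw [iK_t2]; exact cle_top a
      · rw [iK_Y a ha' b hb']
        exact Or.inr ⟨hneY _ (hYc a ha' b hb'), Q.i_le_right _ trivial _ trivial⟩
  have cle_iK : ∀ a b w, cle w a → cle w b → cle w (iK a b) := by
    intro a b w hwa hwb
    by_cases ha : a = τ
    · subst ha; rw [iK_t1]; exact hwb
    · by_cases hb : b = τ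
      · subst hb; rw [iK_t2]; exact hwa
      · simp only [hiK]
        rw [if_neg ha, if_neg hb]
        rcases hwa with rfl | ⟨hw, hwa⟩
        · exact absurd rfl ha
        · rcases hwb with rfl | ⟨_, hwb⟩
          · exact absurd rfl hb
          · exact Or.inr ⟨hw, Q.le_i _ trivial _ trivial _ trivial hwa hwb⟩
  -- greatest lower bounds of finite subsets of `C`
  have exmin : ∀ S : Finset ℕ, ↑S ⊆ (C : Set ℕ) →
      ∃ m ∈ C, (∀ x ∈ S, cle m x) ∧ ∀ w, (∀ x ∈ S, cle w x) → cle w m := by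
    intro S
    induction S using Finset.induction_on with
    | empty =>
      intro _
      exact ⟨τ, τC, by simp, fun w _ => cle_top w⟩
    | @insert a S ha ih =>
      intro hsub
      have haC : a ∈ C := hsub (Finset.mem_insert_self a S)
      obtain ⟨m, hmC, hlb, hgr⟩ := ih (fun x hx => hsub (by simp [hx]))
      refine ⟨iK a m, iK_mem a haC m hmC, ?_, ?_⟩
      · intro x hx
        rcases Finset.mem_insert.1 hx with h | hx
        · rw [h]; exact iK_le_left a haC m hmC
        · exact cle_trans _ m _ (iK_le_right a haC m hmC) (hlb x hx)
      · intro w hw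
        exact cle_iK a m w (hw a (Finset.mem_insert_self a S))
          (hgr w (fun x hx => hw x (by simp [hx])))
  -- the join
  have UBsub : ∀ a b : ℕ, ↑(C.filter (fun c => cle a c ∧ cle b c)) ⊆ (C : Set ℕ) := by
    intro a b x hx
    simp only [Finset.coe_filter, Set.mem_setOf_eq] at hx
    exact hx.1
  set sK : ℕ → ℕ → ℕ := fun a b => (exmin _ (UBsub a b)).choose with hsK
  have sK_spec : ∀ a b : ℕ, sK a b ∈ C ∧
      (∀ x ∈ C.filter (fun c => cle a c ∧ cle b c), cle (sK a b) x) ∧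
      ∀ w, (∀ x ∈ C.filter (fun c => cle a c ∧ cle b c), cle w x) → cle w (sK a b) := by
    intro a b
    obtain ⟨h1, h2, h3⟩ := (exmin _ (UBsub a b)).choose_spec
    exact ⟨h1, h2, h3⟩
  have le_sK_left : ∀ a b, cle a (sK a b) := by
    intro a b
    exact (sK_spec a b).2.2 a (fun x hx => ((Finset.mem_filter.1 hx).2).1)
  have le_sK_right : ∀ a b, cle b (sK a b) := by
    intro a b
    exact (sK_spec a b).2.2 b (fun x hx => ((Finset.mem_filter.1 hx).2).2)
  have sK_le : ∀ a b c, c ∈ C → cle a c → cle b c → cle (sK a b) c := by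
    intro a b c hc h1 h2
    exact (sK_spec a b).2.1 c (Finset.mem_filter.2 ⟨hc, h1, h2⟩)
  -- assemble
  refine ⟨{
    C := ↑C
    s := sK
    i := iK
    le := cle
    refl := fun a ha => cle_refl a ha
    antisymm := fun a _ b _ h1 h2 => cle_antisymm a b h1 h2
    trans := fun a _ b _ c _ h1 h2 => cle_trans a b c h1 h2
    s_mem := fun a _ b _ => (sK_spec a b).1
    i_mem := fun a ha b hb => iK_mem a ha b hb
    le_s_left := fun a _ b _ => le_sK_left a b
    le_s_right := fun a _ b _ => le_sK_right a b
    s_le := fun a _ b _ c hc h1 h2 => sK_le a b c hc h1 h2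
    i_le_left := fun a ha b hb => iK_le_left a ha b hb
    i_le_right := fun a ha b hb => iK_le_right a ha b hb
    le_i := fun a _ b _ c _ h1 h2 => cle_iK a b c h1 h2 }, ?_, ?_, ?_, ?_⟩
  · exact C.finite_toSet
  · exact fun x hx => Finset.mem_coe.2 (YC (hXY hx))
  · intro a ha b hb
    exact iK_Y a (hXY ha) b (hXY hb)
  · -- joins that exist in X are preserved
    intro a ha b hb hab
    show sK a b = q.1 a b
    have haY := hXY ha
    have hbY := hXY hb
    have habY := hXY hab
    refine cle_antisymm _ _ ?_ ?_
    · exact sK_le a b _ (YC habY) (Or.inr ⟨hneY a haY, Q.le_s_left _ trivial _ trivial⟩)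
        (Or.inr ⟨hneY b hbY, Q.le_s_right _ trivial _ trivial⟩)
    · refine (sK_spec a b).2.2 _ ?_
      intro x hx
      obtain ⟨hxC, hax, hbx⟩ := Finset.mem_filter.1 hx
      rcases hax with rfl | ⟨_, hax⟩
      · exact cle_top _
      · rcases hbx with rfl | ⟨_, hbx⟩
        · exact cle_top _
        · exact Or.inr ⟨hneY _ habY, Q.s_le _ trivial _ trivial _ trivial hax hbx⟩

end FEP

section Amalgam

variable {β : Type} [Finite β] (K : PL ℕ) (B : PL β)

/-- Amalgamation: a finite partial lattice `K` on ℕ and a finite lattice `B` sharing a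
common sublattice `T` (via `j`) both embed into a finite partial lattice `M`. -/
theorem amalgam (hKfin : K.C.Finite) (T : Set ℕ) (hTK : T ⊆ K.C)
    (hB : B.C = Set.univ)
    (hTs : ∀ a ∈ T, ∀ b ∈ T, K.s a b ∈ T) (hTi : ∀ a ∈ T, ∀ b ∈ T, K.i a b ∈ T)
    (j : ℕ → β) (hjinj : Set.InjOn j T)
    (hjs : ∀ a ∈ T, ∀ b ∈ T, j (K.s a b) = B.s (j a) (j b))
    (hji : ∀ a ∈ T, ∀ b ∈ T, j (K.i a b) = B.i (j a) (j b)) :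
    ∃ (M : PL (Set ℕ)) (φ : ℕ → Set ℕ) (ψ : β → Set ℕ),
      M.C.Finite ∧
      Set.InjOn φ K.C ∧ Function.Injective ψ ∧
      (∀ x ∈ K.C, φ x ∈ M.C) ∧ (∀ b, ψ b ∈ M.C) ∧
      (∀ x ∈ K.C, ∀ y ∈ K.C,
        φ (K.s x y) = M.s (φ x) (φ y) ∧ φ (K.i x y) = M.i (φ x) (φ y)) ∧
      (∀ x y, ψ (B.s x y) = M.s (ψ x) (ψ y) ∧ ψ (B.i x y) = M.i (ψ x) (ψ y)) ∧
      (∀ t ∈ T, ψ (j t) = φ t) := by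
  classical
  have bmem : ∀ x : β, x ∈ B.C := by rw [hB]; exact fun x => trivial
  -- fresh naturals for the elements of `β` outside the image of `T`
  obtain ⟨bd, hbd⟩ := hKfin.bddAbove
  set N : ℕ := bd + 1 with hN
  have hNK : ∀ m, N + m ∉ K.C := by
    intro m hm
    have := hbd hm
    simp only [hN] at this
    omega
  have : Countable β := Finite.to_countable
  obtain ⟨g, hg⟩ := exists_injective_nat β
  set ν : β → ℕ := fun x => if h : ∃ t ∈ T, j t = x then h.choose else N + g x with hν
  have hν1 : ∀ x : β, (∃ t ∈ T, j t = x) → ν x ∈ T ∧ j (ν x) = x := by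
    intro x h
    simp only [hν, dif_pos h]
    exact ⟨h.choose_spec.1, h.choose_spec.2⟩
  have hν2 : ∀ x : β, ¬(∃ t ∈ T, j t = x) → ν x ∉ K.C := by
    intro x h
    simp only [hν, dif_neg h]
    exact hNK _
  have hν3 : ∀ x : β, ν x ∈ K.C → ν x ∈ T ∧ j (ν x) = x := by
    intro x hx
    by_cases h : ∃ t ∈ T, j t = x
    · exact hν1 x h
    · exact absurd hx (hν2 x h)
  have hν4 : ∀ t ∈ T, ν (j t) = t := by
    intro t ht
    have h : ∃ t' ∈ T, j t' = j t := ⟨t, ht, rfl⟩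
    obtain ⟨h1, h2⟩ := hν1 (j t) h
    exact hjinj h1 ht h2
  have hνinj : Function.Injective ν := by
    intro x y hxy
    by_cases hx : ∃ t ∈ T, j t = x <;> by_cases hy : ∃ t ∈ T, j t = y
    · obtain ⟨h1, h2⟩ := hν1 x hx
      obtain ⟨h3, h4⟩ := hν1 y hy
      rw [← h2, ← h4, hxy]
    · exact absurd (hxy ▸ hTK (hν1 x hx).1) (hν2 y hy)
    · exact absurd (hxy ▸ hTK (hν1 y hy).1) (hν2 x hx)
    · have h1 : N + g x = N + g y := by
        have e1 : ν x = N + g x := by simp only [hν, dif_neg hx]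
        have e2 : ν y = N + g y := by simp only [hν, dif_neg hy]
        rw [← e1, ← e2, hxy]
      exact hg (by omega)
  -- the pushout preorder on `K.C ∪ range ν`
  set CP : Set ℕ := K.C ∪ Set.range ν with hCP
  have hKCP : ∀ x ∈ K.C, x ∈ CP := fun x hx => Or.inl hx
  have hνCP : ∀ a : β, ν a ∈ CP := fun a => Or.inr ⟨a, rfl⟩
  have hCPfin : CP.Finite := hKfin.union (Set.finite_range ν)
  set rP : ℕ → ℕ → Prop := fun x y =>
    (x ∈ K.C ∧ y ∈ K.C ∧ K.le x y) ∨
    (∃ a b, x = ν a ∧ y = ν b ∧ B.le a b) ∨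
    (x ∈ K.C ∧ ∃ b, y = ν b ∧ ∃ t ∈ T, K.le x t ∧ B.le (j t) b) ∨
    (∃ a, x = ν a ∧ y ∈ K.C ∧ ∃ t ∈ T, B.le a (j t) ∧ K.le t y) with hrP
  -- `j` preserves and reflects the order between `T` and `B`
  have jle : ∀ t ∈ T, ∀ t' ∈ T, (K.le t t' ↔ B.le (j t) (j t')) := by
    intro t ht t' ht'
    constructor
    · intro h
      have h2 : K.i t t' = t := (K.le_iff_i (hTK ht) (hTK ht')).1 h
      have h3 : B.i (j t) (j t') = j t := by rw [← hji t ht t' ht', h2]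
      exact (B.le_iff_i (bmem _) (bmem _)).2 h3
    · intro h
      have h2 : B.i (j t) (j t') = j t := (B.le_iff_i (bmem _) (bmem _)).1 h
      have h3 : j (K.i t t') = j t := by rw [hji t ht t' ht', h2]
      have h4 : K.i t t' = t := hjinj (hTi t ht t' ht') ht h3
      exact (K.le_iff_i (hTK ht) (hTK ht')).2 h4
  -- canonical descriptions of `rP`
  have L1 : ∀ x ∈ K.C, ∀ y ∈ K.C, (rP x y ↔ K.le x y) := by
    intro x hx y hy
    constructor
    · rintro (⟨_, _, h⟩ | ⟨a, b, rfl, rfl, h⟩ | ⟨_, ⟨b, rfl, t, ht, h1, h2⟩⟩ |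
        ⟨a, rfl, _, t, ht, h1, h2⟩)
      · exact h
      · obtain ⟨ha1, ha2⟩ := hν3 a hx
        obtain ⟨hb1, hb2⟩ := hν3 b hy
        have := (jle _ ha1 _ hb1).2 (by rw [ha2, hb2]; exact h)
        exact this
      · obtain ⟨hb1, hb2⟩ := hν3 b hy
        have h3 : B.le (j t) (j (ν b)) := by rw [hb2]; exact h2
        have h4 : K.le t (ν b) := (jle _ ht _ hb1).2 h3
        exact K.trans _ hx _ (hTK ht) _ (hTK hb1) h1 h4
      · obtain ⟨ha1, ha2⟩ := hν3 a hx
        have h3 : B.le (j (ν a)) (j t) := by rw [ha2]; exact h1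
        have h4 : K.le (ν a) t := (jle _ ha1 _ ht).2 h3
        exact K.trans _ hx _ (hTK ht) _ hy h4 h2
    · intro h
      exact Or.inl ⟨hx, hy, h⟩
  have L2 : ∀ a b : β, (rP (ν a) (ν b) ↔ B.le a b) := by
    intro a b
    constructor
    · rintro (⟨hx, hy, h⟩ | ⟨a', b', ha', hb', h⟩ | ⟨hx, ⟨b', hb', t, ht, h1, h2⟩⟩ |
        ⟨a', ha', hy, t, ht, h1, h2⟩)
      · obtain ⟨ha1, ha2⟩ := hν3 a hx
        obtain ⟨hb1, hb2⟩ := hν3 b hy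
        rw [← ha2, ← hb2]
        exact (jle _ ha1 _ hb1).1 h
      · rw [hνinj ha', hνinj hb']; exact h
      · obtain ⟨ha1, ha2⟩ := hν3 a hx
        have hb' : b' = b := hνinj hb'.symm
        subst hb'
        have h3 : B.le (j (ν a)) (j t) := (jle _ ha1 _ ht).1 h1
        rw [ha2] at h3
        exact B.trans _ (bmem _) _ (bmem _) _ (bmem _) h3 h2
      · have ha'' : a' = a := hνinj ha'.symm
        subst ha''
        obtain ⟨hb1, hb2⟩ := hν3 b hy
        have h3 : B.le (j t) (j (ν b)) := (jle _ ht _ hb1).1 h2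
        rw [hb2] at h3
        exact B.trans _ (bmem _) _ (bmem _) _ (bmem _) h1 h3
    · intro h
      exact Or.inr (Or.inl ⟨a, b, rfl, rfl, h⟩)
  have L3 : ∀ x ∈ K.C, ∀ b : β, (rP x (ν b) ↔ ∃ t ∈ T, K.le x t ∧ B.le (j t) b) := by
    intro x hx b
    constructor
    · rintro (⟨_, hy, h⟩ | ⟨a', b', ha', hb', h⟩ | ⟨_, ⟨b', hb', t, ht, h1, h2⟩⟩ |
        ⟨a', ha', hy, t, ht, h1, h2⟩)
      · obtain ⟨hb1, hb2⟩ := hν3 b hy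
        exact ⟨ν b, hb1, h, by rw [hb2]; exact B.refl _ (bmem _)⟩
      · have hb' : b' = b := hνinj hb'.symm
        subst hb'
        obtain ⟨ha1, ha2⟩ := hν3 a' (ha' ▸ hx)
        refine ⟨ν a', ha1, ?_, by rw [ha2]; exact h⟩
        rw [← ha']
        exact K.refl _ hx
      · have hb'' : b' = b := hνinj hb'.symm
        subst hb''
        exact ⟨t, ht, h1, h2⟩
      · obtain ⟨ha1, ha2⟩ := hν3 a' (ha' ▸ hx)
        obtain ⟨hb1, hb2⟩ := hν3 b hy
        refine ⟨ν b, hb1, ?_, by rw [hb2]; exact B.refl _ (bmem _)⟩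
        have h3 : K.le (ν a') t := (jle _ ha1 _ ht).2 (by rw [ha2]; exact h1)
        rw [← ha'] at h3
        exact K.trans _ hx _ (hTK ht) _ (hTK hb1) h3 h2
    · rintro ⟨t, ht, h1, h2⟩
      exact Or.inr (Or.inr (Or.inl ⟨hx, b, rfl, t, ht, h1, h2⟩))
  have L4 : ∀ a : β, ∀ y ∈ K.C, (rP (ν a) y ↔ ∃ t ∈ T, B.le a (j t) ∧ K.le t y) := by
    intro a y hy
    constructor
    · rintro (⟨hx, _, h⟩ | ⟨a', b', ha', hb', h⟩ | ⟨hx, ⟨b', hb', t, ht, h1, h2⟩⟩ |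
        ⟨a', ha', _, t, ht, h1, h2⟩)
      · obtain ⟨ha1, ha2⟩ := hν3 a hx
        exact ⟨ν a, ha1, by rw [ha2]; exact B.refl _ (bmem _), h⟩
      · have ha'' : a' = a := hνinj ha'.symm
        subst ha''
        obtain ⟨hb1, hb2⟩ := hν3 b' (hb' ▸ hy)
        refine ⟨ν b', hb1, by rw [hb2]; exact h, ?_⟩
        rw [← hb']
        exact K.refl _ hy
      · obtain ⟨ha1, ha2⟩ := hν3 a hx
        obtain ⟨hb1, hb2⟩ := hν3 b' (hb' ▸ hy)
        refine ⟨ν a, ha1, by rw [ha2]; exact B.refl _ (bmem _), ?_⟩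
        have h3 : K.le t (ν b') := (jle _ ht _ hb1).2 (by rw [hb2]; exact h2)
        have h4 : K.le (ν a) t := h1
        rw [← hb'] at h3
        exact K.trans _ (hTK ha1) _ (hTK ht) _ hy h4 h3
      · have ha'' : a' = a := hνinj ha'.symm
        subst ha''
        exact ⟨t, ht, h1, h2⟩
    · rintro ⟨t, ht, h1, h2⟩
      exact Or.inr (Or.inr (Or.inr ⟨a, rfl, hy, t, ht, h1, h2⟩))
  have memCP : ∀ x ∈ CP, x ∈ K.C ∨ ∃ a, x = ν a := by
    rintro x (hx | ⟨a, rfl⟩)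
    · exact Or.inl hx
    · exact Or.inr ⟨a, rfl⟩
  have rP_refl : ∀ x ∈ CP, rP x x := by
    intro x hx
    rcases memCP x hx with hx' | ⟨a, rfl⟩
    · exact (L1 x hx' x hx').2 (K.refl _ hx')
    · exact (L2 a a).2 (B.refl _ (bmem _))
  have rP_trans : ∀ x ∈ CP, ∀ y ∈ CP, ∀ z ∈ CP, rP x y → rP y z → rP x z := by
    intro x hx y hy z hz h1 h2
    rcases memCP x hx with hx' | ⟨a, rfl⟩ <;> rcases memCP y hy with hy' | ⟨c, rfl⟩ <;>
      rcases memCP z hz with hz' | ⟨b, rfl⟩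
    · exact (L1 x hx' z hz').2 (K.trans _ hx' _ hy' _ hz'
        ((L1 x hx' y hy').1 h1) ((L1 y hy' z hz').1 h2))
    · obtain ⟨t, ht, k1, k2⟩ := (L3 y hy' b).1 h2
      exact (L3 x hx' b).2 ⟨t, ht, K.trans _ hx' _ hy' _ (hTK ht)
        ((L1 x hx' y hy').1 h1) k1, k2⟩
    · obtain ⟨t1, ht1, k1, b1⟩ := (L3 x hx' c).1 h1
      obtain ⟨t2, ht2, b2, k2⟩ := (L4 c z hz').1 h2
      have hbb : B.le (j t1) (j t2) := B.trans _ (bmem _) _ (bmem _) _ (bmem _) b1 b2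
      have hk : K.le t1 t2 := (jle _ ht1 _ ht2).2 hbb
      exact (L1 x hx' z hz').2 (K.trans _ hx' _ (hTK ht1) _ hz' k1
        (K.trans _ (hTK ht1) _ (hTK ht2) _ hz' hk k2))
    · obtain ⟨t1, ht1, k1, b1⟩ := (L3 x hx' c).1 h1
      have b2 : B.le c b := (L2 c b).1 h2
      exact (L3 x hx' b).2 ⟨t1, ht1, k1, B.trans _ (bmem _) _ (bmem _) _ (bmem _) b1 b2⟩
    · obtain ⟨t, ht, b1, k1⟩ := (L4 a y hy').1 h1
      exact (L4 a z hz').2 ⟨t, ht, b1, K.trans _ (hTK ht) _ hy' _ hz' k1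
        ((L1 y hy' z hz').1 h2)⟩
    · obtain ⟨t1, ht1, b1, k1⟩ := (L4 a y hy').1 h1
      obtain ⟨t2, ht2, k2, b2⟩ := (L3 y hy' b).1 h2
      have hk : K.le t1 t2 := K.trans _ (hTK ht1) _ hy' _ (hTK ht2) k1 k2
      have hbb : B.le (j t1) (j t2) := (jle _ ht1 _ ht2).1 hk
      exact (L2 a b).2 (B.trans _ (bmem _) _ (bmem _) _ (bmem _) b1
        (B.trans _ (bmem _) _ (bmem _) _ (bmem _) hbb b2))
    · have b1 : B.le a c := (L2 a c).1 h1
      obtain ⟨t, ht, b2, k2⟩ := (L4 c z hz').1 h2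
      exact (L4 a z hz').2 ⟨t, ht, B.trans _ (bmem _) _ (bmem _) _ (bmem _) b1 b2, k2⟩
    · exact (L2 a b).2 (B.trans _ (bmem _) _ (bmem _) _ (bmem _)
        ((L2 a c).1 h1) ((L2 c b).1 h2))
  have mixed : ∀ x ∈ K.C, ∀ b : β, rP x (ν b) → rP (ν b) x → x = ν b := by
    intro x hx b h1 h2
    obtain ⟨t1, ht1, k1, b1⟩ := (L3 x hx b).1 h1
    obtain ⟨t2, ht2, b2, k2⟩ := (L4 b x hx).1 h2
    have hb12 : B.le (j t1) (j t2) := B.trans _ (bmem _) _ (bmem _) _ (bmem _) b1 b2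
    have hk12 : K.le t1 t2 := (jle _ ht1 _ ht2).2 hb12
    have hxt2 : K.le x t2 := K.trans _ hx _ (hTK ht1) _ (hTK ht2) k1 hk12
    have hxet2 : x = t2 := K.antisymm _ hx _ (hTK ht2) hxt2 k2
    have ht1x : K.le t1 x := hxet2 ▸ hk12
    have hxet1 : x = t1 := K.antisymm _ hx _ (hTK ht1) k1 ht1x
    have hbx : b = j x := by
      refine B.antisymm _ (bmem _) _ (bmem _) ?_ ?_
      · rw [hxet2]; exact b2
      · rw [hxet1]; exact b1
    rw [hbx, hν4 x (hxet1 ▸ ht1)]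
  have rP_antisymm : ∀ x ∈ CP, ∀ y ∈ CP, rP x y → rP y x → x = y := by
    intro x hx y hy h1 h2
    rcases memCP x hx with hx' | ⟨a, rfl⟩ <;> rcases memCP y hy with hy' | ⟨b, rfl⟩
    · exact K.antisymm _ hx' _ hy' ((L1 x hx' y hy').1 h1) ((L1 y hy' x hx').1 h2)
    · exact mixed x hx' b h1 h2
    · exact (mixed y hy' a h2 h1).symm
    · exact congrArg ν (B.antisymm _ (bmem _) _ (bmem _) ((L2 a b).1 h1) ((L2 b a).1 h2))
  -- Dedekind–MacNeille completion of the pushout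
  set up : Set ℕ → Set ℕ := fun S => {y | y ∈ CP ∧ ∀ x ∈ S, rP x y} with hup
  set lo : Set ℕ → Set ℕ := fun S => {y | y ∈ CP ∧ ∀ x ∈ S, rP y x} with hlo
  set cl : Set ℕ → Set ℕ := fun S => lo (up S) with hcl
  have up_sub : ∀ S, up S ⊆ CP := fun S y hy => hy.1
  have lo_sub : ∀ S, lo S ⊆ CP := fun S y hy => hy.1
  have cl_sub : ∀ S, cl S ⊆ CP := fun S => lo_sub _
  have sub_cl : ∀ S, S ⊆ CP → S ⊆ cl S := by
    intro S hS x hx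
    exact ⟨hS hx, fun w hw => hw.2 x hx⟩
  have up_cl : ∀ S, S ⊆ CP → up (cl S) = up S := by
    intro S hS
    apply Set.Subset.antisymm
    · intro y hy
      exact ⟨hy.1, fun x hx => hy.2 x (sub_cl S hS hx)⟩
    · intro y hy
      exact ⟨hy.1, fun x hx => hx.2 y hy⟩
  have cl_idem : ∀ S, S ⊆ CP → cl (cl S) = cl S := by
    intro S hS
    show lo (up (cl S)) = cl S
    rw [up_cl S hS]
  have cl_mono : ∀ S S', S ⊆ S' → cl S ⊆ cl S' := by
    intro S S' hss w hw
    exact ⟨hw.1, fun x hx => hw.2 x ⟨hx.1, fun v hv => hx.2 v (hss hv)⟩⟩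
  have up_union : ∀ S S', up (S ∪ S') = up S ∩ up S' := by
    intro S S'
    ext y
    constructor
    · intro hy
      exact ⟨⟨hy.1, fun x hx => hy.2 x (Or.inl hx)⟩, ⟨hy.1, fun x hx => hy.2 x (Or.inr hx)⟩⟩
    · rintro ⟨h1, h2⟩
      refine ⟨h1.1, ?_⟩
      rintro x (hx | hx)
      · exact h1.2 x hx
      · exact h2.2 x hx
  -- the completion as a partial lattice
  set MC : Set (Set ℕ) := {S | S ⊆ CP ∧ cl S = S} with hMC
  have inter_mem : ∀ S ∈ MC, ∀ S' ∈ MC, S ∩ S' ∈ MC := by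
    intro S hS S' hS'
    refine ⟨fun x hx => hS.1 hx.1, Set.Subset.antisymm ?_ ?_⟩
    · intro w hw
      refine ⟨?_, ?_⟩
      · rw [← hS.2]
        exact cl_mono _ _ Set.inter_subset_left hw
      · rw [← hS'.2]
        exact cl_mono _ _ Set.inter_subset_right hw
    · exact sub_cl _ (fun x hx => hS.1 hx.1)
  set M : PL (Set ℕ) := {
    C := MC
    s := fun S S' => cl (S ∪ S')
    i := fun S S' => S ∩ S'
    le := fun S S' => S ⊆ S'
    refl := fun S _ => subset_rfl
    antisymm := fun S _ S' _ h1 h2 => Set.Subset.antisymm h1 h2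
    trans := fun S _ S' _ S'' _ h1 h2 => h1.trans h2
    s_mem := fun S hS S' hS' =>
      ⟨cl_sub _, cl_idem _ (Set.union_subset hS.1 hS'.1)⟩
    i_mem := fun S hS S' hS' => inter_mem S hS S' hS'
    le_s_left := fun S hS S' hS' =>
      (Set.subset_union_left).trans (sub_cl _ (Set.union_subset hS.1 hS'.1))
    le_s_right := fun S hS S' hS' =>
      (Set.subset_union_right).trans (sub_cl _ (Set.union_subset hS.1 hS'.1))
    s_le := fun S _ S' _ W hW h1 h2 => by
      have : cl (S ∪ S') ⊆ cl W := cl_mono _ _ (Set.union_subset h1 h2)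
      rwa [hW.2] at this
    i_le_left := fun S _ S' _ => Set.inter_subset_left
    i_le_right := fun S _ S' _ => Set.inter_subset_right
    le_i := fun S _ S' _ W _ h1 h2 => Set.subset_inter h1 h2 } with hM
  -- principal cuts
  set dn : ℕ → Set ℕ := fun z => {w | w ∈ CP ∧ rP w z} with hdn
  set ups : ℕ → Set ℕ := fun z => {y | y ∈ CP ∧ rP z y} with hups
  have up_dn : ∀ z ∈ CP, up (dn z) = ups z := by
    intro z hz
    apply Set.Subset.antisymm
    · intro y hy
      exact ⟨hy.1, hy.2 z ⟨hz, rP_refl z hz⟩⟩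
    · intro y hy
      exact ⟨hy.1, fun x hx => rP_trans x hx.1 z hz y hy.1 hx.2 hy.2⟩
  have lo_ups : ∀ z ∈ CP, lo (ups z) = dn z := by
    intro z hz
    apply Set.Subset.antisymm
    · intro w hw
      exact ⟨hw.1, hw.2 z ⟨hz, rP_refl z hz⟩⟩
    · intro w hw
      exact ⟨hw.1, fun y hy => rP_trans w hw.1 z hz y hy.1 hw.2 hy.2⟩
  have dn_cut : ∀ z ∈ CP, dn z ∈ MC := by
    intro z hz
    refine ⟨fun w hw => hw.1, ?_⟩
    show lo (up (dn z)) = dn z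
    rw [up_dn z hz, lo_ups z hz]
  have dn_inj : ∀ x ∈ CP, ∀ y ∈ CP, dn x = dn y → x = y := by
    intro x hx y hy h
    have h1 : x ∈ dn y := h ▸ ⟨hx, rP_refl x hx⟩
    have h2 : y ∈ dn x := h.symm ▸ ⟨hy, rP_refl y hy⟩
    exact rP_antisymm x hx y hy h1.2 h2.2
  -- least upper bound / greatest lower bound transfer
  have Plub_K : ∀ x ∈ K.C, ∀ y ∈ K.C, ∀ w ∈ CP,
      ((rP x w ∧ rP y w) ↔ rP (K.s x y) w) := by
    intro x hx y hy w hw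
    have hs := K.s_mem _ hx _ hy
    rcases memCP w hw with hw' | ⟨c, rfl⟩
    · rw [L1 x hx w hw', L1 y hy w hw', L1 _ hs w hw']
      constructor
      · rintro ⟨h1, h2⟩
        exact K.s_le _ hx _ hy _ hw' h1 h2
      · intro h
        exact ⟨K.trans _ hx _ hs _ hw' (K.le_s_left _ hx _ hy) h,
          K.trans _ hy _ hs _ hw' (K.le_s_right _ hx _ hy) h⟩
    · rw [L3 x hx c, L3 y hy c, L3 _ hs c]
      constructor
      · rintro ⟨⟨t1, ht1, k1, b1⟩, ⟨t2, ht2, k2, b2⟩⟩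
        refine ⟨K.s t1 t2, hTs _ ht1 _ ht2, ?_, ?_⟩
        · exact K.s_mono hx hy (hTK ht1) (hTK ht2) k1 k2
        · rw [hjs _ ht1 _ ht2]
          exact B.s_le _ (bmem _) _ (bmem _) _ (bmem _) b1 b2
      · rintro ⟨t, ht, k1, b1⟩
        exact ⟨⟨t, ht, K.trans _ hx _ hs _ (hTK ht) (K.le_s_left _ hx _ hy) k1, b1⟩,
          ⟨t, ht, K.trans _ hy _ hs _ (hTK ht) (K.le_s_right _ hx _ hy) k1, b1⟩⟩
  have Pglb_K : ∀ x ∈ K.C, ∀ y ∈ K.C, ∀ w ∈ CP,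
      ((rP w x ∧ rP w y) ↔ rP w (K.i x y)) := by
    intro x hx y hy w hw
    have hi := K.i_mem _ hx _ hy
    rcases memCP w hw with hw' | ⟨a, rfl⟩
    · rw [L1 w hw' x hx, L1 w hw' y hy, L1 w hw' _ hi]
      constructor
      · rintro ⟨h1, h2⟩
        exact K.le_i _ hx _ hy _ hw' h1 h2
      · intro h
        exact ⟨K.trans _ hw' _ hi _ hx h (K.i_le_left _ hx _ hy),
          K.trans _ hw' _ hi _ hy h (K.i_le_right _ hx _ hy)⟩
    · rw [L4 a x hx, L4 a y hy, L4 a _ hi]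
      constructor
      · rintro ⟨⟨t1, ht1, b1, k1⟩, ⟨t2, ht2, b2, k2⟩⟩
        refine ⟨K.i t1 t2, hTi _ ht1 _ ht2, ?_, ?_⟩
        · rw [hji _ ht1 _ ht2]
          exact B.le_i _ (bmem _) _ (bmem _) _ (bmem _) b1 b2
        · exact K.i_mono (hTK ht1) (hTK ht2) hx hy k1 k2
      · rintro ⟨t, ht, b1, k1⟩
        exact ⟨⟨t, ht, b1, K.trans _ (hTK ht) _ hi _ hx k1 (K.i_le_left _ hx _ hy)⟩,
          ⟨t, ht, b1, K.trans _ (hTK ht) _ hi _ hy k1 (K.i_le_right _ hx _ hy)⟩⟩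
  have Plub_B : ∀ a b : β, ∀ w ∈ CP,
      ((rP (ν a) w ∧ rP (ν b) w) ↔ rP (ν (B.s a b)) w) := by
    intro a b w hw
    rcases memCP w hw with hw' | ⟨c, rfl⟩
    · rw [L4 a w hw', L4 b w hw', L4 _ w hw']
      constructor
      · rintro ⟨⟨t1, ht1, b1, k1⟩, ⟨t2, ht2, b2, k2⟩⟩
        refine ⟨K.s t1 t2, hTs _ ht1 _ ht2, ?_, ?_⟩
        · rw [hjs _ ht1 _ ht2]
          exact B.s_mono (bmem _) (bmem _) (bmem _) (bmem _) b1 b2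
        · exact K.s_le _ (hTK ht1) _ (hTK ht2) _ hw' k1 k2
      · rintro ⟨t, ht, b1, k1⟩
        exact ⟨⟨t, ht, B.trans _ (bmem _) _ (bmem _) _ (bmem _)
            (B.le_s_left _ (bmem _) _ (bmem _)) b1, k1⟩,
          ⟨t, ht, B.trans _ (bmem _) _ (bmem _) _ (bmem _)
            (B.le_s_right _ (bmem _) _ (bmem _)) b1, k1⟩⟩
    · rw [L2 a c, L2 b c, L2 _ c]
      constructor
      · rintro ⟨h1, h2⟩
        exact B.s_le _ (bmem _) _ (bmem _) _ (bmem _) h1 h2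
      · intro h
        exact ⟨B.trans _ (bmem _) _ (bmem _) _ (bmem _)
            (B.le_s_left _ (bmem _) _ (bmem _)) h,
          B.trans _ (bmem _) _ (bmem _) _ (bmem _)
            (B.le_s_right _ (bmem _) _ (bmem _)) h⟩
  have Pglb_B : ∀ a b : β, ∀ w ∈ CP,
      ((rP w (ν a) ∧ rP w (ν b)) ↔ rP w (ν (B.i a b))) := by
    intro a b w hw
    rcases memCP w hw with hw' | ⟨c, rfl⟩
    · rw [L3 w hw' a, L3 w hw' b, L3 w hw' _]
      constructor
      · rintro ⟨⟨t1, ht1, k1, b1⟩, ⟨t2, ht2, k2, b2⟩⟩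
        refine ⟨K.i t1 t2, hTi _ ht1 _ ht2, ?_, ?_⟩
        · exact K.le_i _ (hTK ht1) _ (hTK ht2) _ hw' k1 k2
        · rw [hji _ ht1 _ ht2]
          exact B.i_mono (bmem _) (bmem _) (bmem _) (bmem _) b1 b2
      · rintro ⟨t, ht, k1, b1⟩
        exact ⟨⟨t, ht, k1, B.trans _ (bmem _) _ (bmem _) _ (bmem _) b1
            (B.i_le_left _ (bmem _) _ (bmem _))⟩,
          ⟨t, ht, k1, B.trans _ (bmem _) _ (bmem _) _ (bmem _) b1
            (B.i_le_right _ (bmem _) _ (bmem _))⟩⟩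
    · rw [L2 c a, L2 c b, L2 c _]
      constructor
      · rintro ⟨h1, h2⟩
        exact B.le_i _ (bmem _) _ (bmem _) _ (bmem _) h1 h2
      · intro h
        exact ⟨B.trans _ (bmem _) _ (bmem _) _ (bmem _) h
            (B.i_le_left _ (bmem _) _ (bmem _)),
          B.trans _ (bmem _) _ (bmem _) _ (bmem _) h
            (B.i_le_right _ (bmem _) _ (bmem _))⟩
  -- hom equalities
  have hom_s : ∀ x ∈ CP, ∀ y ∈ CP, ∀ z ∈ CP,
      (∀ w ∈ CP, (rP x w ∧ rP y w) ↔ rP z w) → cl (dn x ∪ dn y) = dn z := by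
    intro x hx y hy z hz h
    show lo (up (dn x ∪ dn y)) = dn z
    rw [up_union, up_dn x hx, up_dn y hy]
    have : ups x ∩ ups y = ups z := by
      ext w
      constructor
      · rintro ⟨⟨hw, h1⟩, ⟨_, h2⟩⟩
        exact ⟨hw, (h w hw).1 ⟨h1, h2⟩⟩
      · rintro ⟨hw, h1⟩
        obtain ⟨h2, h3⟩ := (h w hw).2 h1
        exact ⟨⟨hw, h2⟩, ⟨hw, h3⟩⟩
    rw [this, lo_ups z hz]
  have hom_i : ∀ x ∈ CP, ∀ y ∈ CP, ∀ z ∈ CP,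
      (∀ w ∈ CP, (rP w x ∧ rP w y) ↔ rP w z) → dn x ∩ dn y = dn z := by
    intro x hx y hy z hz h
    ext w
    constructor
    · rintro ⟨⟨hw, h1⟩, ⟨_, h2⟩⟩
      exact ⟨hw, (h w hw).1 ⟨h1, h2⟩⟩
    · rintro ⟨hw, h1⟩
      obtain ⟨h2, h3⟩ := (h w hw).2 h1
      exact ⟨⟨hw, h2⟩, ⟨hw, h3⟩⟩
  -- assemble the result
  refine ⟨M, dn, fun b => dn (ν b), ?_, ?_, ?_, ?_, ?_, ?_, ?_, ?_⟩
  · exact Set.Finite.subset hCPfin.finite_subsets (fun S hS => hS.1)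
  · exact fun x hx y hy h => dn_inj x (hKCP x hx) y (hKCP y hy) h
  · exact fun a b h => hνinj (dn_inj _ (hνCP a) _ (hνCP b) h)
  · exact fun x hx => dn_cut x (hKCP x hx)
  · exact fun b => dn_cut _ (hνCP b)
  · intro x hx y hy
    constructor
    · exact (hom_s x (hKCP x hx) y (hKCP y hy) _ (hKCP _ (K.s_mem _ hx _ hy))
        (fun w hw => Plub_K x hx y hy w hw)).symm
    · exact (hom_i x (hKCP x hx) y (hKCP y hy) _ (hKCP _ (K.i_mem _ hx _ hy))
        (fun w hw => Pglb_K x hx y hy w hw)).symm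
  · intro x y
    constructor
    · exact (hom_s _ (hνCP x) _ (hνCP y) _ (hνCP (B.s x y))
        (fun w hw => Plub_B x y w hw)).symm
    · exact (hom_i _ (hνCP x) _ (hνCP y) _ (hνCP (B.i x y))
        (fun w hw => Pglb_B x y w hw)).symm
  · intro t ht
    show dn (ν (j t)) = dn t
    rw [hν4 t ht]

end Amalgam

section Extend

/-- Injections into ℕ avoiding a finite set. -/
lemma exists_avoid {α : Type} (S : Finset α) (A : Set ℕ) (hA : A.Finite) :
    ∃ w : α → ℕ, Set.InjOn w ↑S ∧ ∀ s ∈ S, w s ∉ A := by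
  classical
  induction S using Finset.induction_on with
  | empty => exact ⟨fun _ => 0, by simp, by simp⟩
  | @insert a S haS ih =>
    obtain ⟨w, hw1, hw2⟩ := ih
    have hfin : (A ∪ w '' ↑S).Finite := hA.union (S.finite_toSet.image w)
    obtain ⟨n, hn⟩ := hfin.infinite_compl.nonempty
    refine ⟨Function.update w a n, ?_, ?_⟩
    · intro x hx y hy hxy
      simp only [Finset.coe_insert, Set.mem_insert_iff, Finset.mem_coe] at hx hy
      rcases hx with rfl | hx <;> rcases hy with rfl | hy
      · rfl
      · have hya : y ≠ x := fun h => haS (h ▸ hy)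
        rw [Function.update_self, Function.update_of_ne hya] at hxy
        exact absurd (hxy ▸ Set.mem_image_of_mem w hy) (fun hc => hn (Or.inr hc))
      · have hxa : x ≠ y := fun h => haS (h ▸ hx)
        rw [Function.update_self, Function.update_of_ne hxa] at hxy
        exact absurd (hxy.symm ▸ Set.mem_image_of_mem w hx) (fun hc => hn (Or.inr hc))
      · have hxa : x ≠ a := fun h => haS (h ▸ hx)
        have hya : y ≠ a := fun h => haS (h ▸ hy)
        rw [Function.update_of_ne hxa, Function.update_of_ne hya] at hxy
        exact hw1 hx hy hxy
    · intro s hs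
      rcases Finset.mem_insert.1 hs with rfl | hs
      · rw [Function.update_self]
        exact fun hc => hn (Or.inl hc)
      · have hsa : s ≠ a := fun h => haS (h ▸ hs)
        rw [Function.update_of_ne hsa]
        exact hw2 s hs

/-- Extend an injection defined on part of a finite set. -/
lemma inj_extend {α : Type} (C : Set α) (hC : C.Finite) (D : Set α) (hDC : D ⊆ C)
    (v : α → ℕ) (hv : Set.InjOn v D) :
    ∃ u : α → ℕ, Set.InjOn u C ∧ ∀ d ∈ D, u d = v d := by
  classical
  obtain ⟨w, hw1, hw2⟩ := exists_avoid (hC.diff (t := D)).toFinset (v '' D)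
    ((hC.subset hDC).image v)
  have hmF : ∀ x, x ∈ (hC.diff (t := D)).toFinset ↔ x ∈ C \ D := fun x => Set.Finite.mem_toFinset _
  refine ⟨fun x => if x ∈ D then v x else w x, ?_, fun d hd => if_pos hd⟩
  intro x hx y hy hxy
  dsimp only at hxy
  by_cases hxD : x ∈ D <;> by_cases hyD : y ∈ D
  · rw [if_pos hxD, if_pos hyD] at hxy
    exact hv hxD hyD hxy
  · rw [if_pos hxD, if_neg hyD] at hxy
    exact absurd (hxy ▸ Set.mem_image_of_mem v hxD) (hw2 y ((hmF y).2 ⟨hy, hyD⟩))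
  · rw [if_neg hxD, if_pos hyD] at hxy
    exact absurd (hxy.symm ▸ Set.mem_image_of_mem v hyD) (hw2 x ((hmF x).2 ⟨hx, hxD⟩))
  · rw [if_neg hxD, if_neg hyD] at hxy
    exact hw1 ((hmF x).2 ⟨hx, hxD⟩) ((hmF y).2 ⟨hy, hyD⟩) hxy

end Extend

section Topology

abbrev 𝒩 : Type := (ℕ → ℕ → ℕ) × (ℕ → ℕ → ℕ)

lemma continuous_ev1 (a b : ℕ) : Continuous (fun p : 𝒩 => p.1 a b) := by
  have h1 : Continuous (fun p : 𝒩 => p.1 a) := (continuous_apply a).comp continuous_fst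
  exact (continuous_apply b).comp h1

lemma continuous_ev2 (a b : ℕ) : Continuous (fun p : 𝒩 => p.2 a b) := by
  have h1 : Continuous (fun p : 𝒩 => p.2 a) := (continuous_apply a).comp continuous_snd
  exact (continuous_apply b).comp h1

/-- Any condition depending on finitely many values of the pair of operations cuts out a
clopen set. -/
lemma clopen_factor {γ : Type} [Finite γ] (E : γ → 𝒩 → ℕ)
    (hE : ∀ g, Continuous (E g)) (P : (γ → ℕ) → Prop) :
    IsOpen {p : 𝒩 | P (fun g => E g p)} ∧ IsClosed {p : 𝒩 | P (fun g => E g p)} := by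
  have hcont : Continuous (fun (p : 𝒩) (g : γ) => E g p) := continuous_pi hE
  constructor
  · exact (isOpen_discrete {f : γ → ℕ | P f}).preimage hcont
  · exact (isClosed_discrete {f : γ → ℕ | P f}).preimage hcont

/-- Basic neighbourhoods in the function space. -/
lemma fun_basis {O : Set (ℕ → ℕ → ℕ)} {f : ℕ → ℕ → ℕ} (hO : O ∈ nhds f) :
    ∃ F : Finset (ℕ × ℕ), ∀ g : ℕ → ℕ → ℕ,
      (∀ ab ∈ F, g ab.1 ab.2 = f ab.1 ab.2) → g ∈ O := by
  classical
  obtain ⟨U, hUO, hUopen, hfU⟩ := mem_nhds_iff.1 hO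
  obtain ⟨I, u, hu, hsub⟩ := isOpen_pi_iff.1 hUopen f hfU
  choose! J w hw hsub2 using fun i (hi : i ∈ I) =>
    isOpen_pi_iff.1 (hu i hi).1 (f i) (hu i hi).2
  refine ⟨I.biUnion (fun i => (J i).image (fun j => (i, j))), ?_⟩
  intro g hg
  apply hUO
  apply hsub
  rw [Set.mem_pi]
  intro i hi
  apply hsub2 i hi
  rw [Set.mem_pi]
  intro jj hjj
  have : g i jj = f i jj :=
    hg (i, jj) (Finset.mem_biUnion.2 ⟨i, Finset.mem_coe.1 hi,
      Finset.mem_image.2 ⟨jj, Finset.mem_coe.1 hjj, rfl⟩⟩)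
  rw [this]
  exact (hw i (Finset.mem_coe.1 hi) jj (Finset.mem_coe.1 hjj)).2

/-- Basic neighbourhoods in `𝒩`. -/
lemma nbhd_basis {O : Set 𝒩} (hO : IsOpen O) {q : 𝒩} (hq : q ∈ O) :
    ∃ F : Finset (ℕ × ℕ), ∀ p : 𝒩,
      (∀ ab ∈ F, p.1 ab.1 ab.2 = q.1 ab.1 ab.2 ∧ p.2 ab.1 ab.2 = q.2 ab.1 ab.2) → p ∈ O := by
  classical
  obtain ⟨U, V, hU, hV, hqU, hqV, hsub⟩ := isOpen_prod_iff.1 hO q.1 q.2 hq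
  obtain ⟨F1, hF1⟩ := fun_basis (hU.mem_nhds hqU)
  obtain ⟨F2, hF2⟩ := fun_basis (hV.mem_nhds hqV)
  refine ⟨F1 ∪ F2, fun p hp => ?_⟩
  have h1 : p.1 ∈ U := hF1 p.1 (fun ab hab => (hp ab (Finset.mem_union_left _ hab)).1)
  have h2 : p.2 ∈ V := hF2 p.2 (fun ab hab => (hp ab (Finset.mem_union_right _ hab)).2)
  exact hsub ⟨h1, h2⟩

end Topology

section GenericSets

/-- The lattice identities for a pair of binary operations. -/
def identsOn {γ : Type} (s i : γ → γ → γ) : Prop :=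
  (∀ a b, s a b = s b a) ∧ (∀ a b c, s (s a b) c = s a (s b c)) ∧
  (∀ a b, i a b = i b a) ∧ (∀ a b c, i (i a b) c = i a (i b c)) ∧
  (∀ a b, s a (i a b) = a) ∧ (∀ a b, i a (s a b) = a)

/-- Local finiteness witnessing sets. -/
def locSet (S : Finset ℕ) : Set ↥LatStr :=
  {p | ∃ T : Finset ℕ, S ⊆ T ∧
    ∀ ab : {x // x ∈ T} × {x // x ∈ T},
      p.val.1 ab.1 ab.2 ∈ T ∧ p.val.2 ab.1 ab.2 ∈ T}

/-- Index data for the ultrahomogeneity requirements: a finite subset `T` of ℕ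
(a potential finite sublattice), a finite lattice structure on `Fin (k+1)`, and an
embedding pattern `j0`. -/
structure UIdx where
  T : Finset ℕ
  k : ℕ
  sB : Fin (k+1) → Fin (k+1) → Fin (k+1)
  iB : Fin (k+1) → Fin (k+1) → Fin (k+1)
  j0 : {x // x ∈ T} → Fin (k+1)

instance : Countable UIdx := by
  have hf : Function.Injective (fun ι : UIdx =>
      (⟨ι.T, ι.k, (ι.sB, ι.iB), ι.j0⟩ : Σ (T : Finset ℕ) (k : ℕ),
        ((Fin (k+1) → Fin (k+1) → Fin (k+1)) × (Fin (k+1) → Fin (k+1) → Fin (k+1))) ×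
          ({x // x ∈ T} → Fin (k+1)))) := by
    rintro ⟨T, k, s, i, j⟩ ⟨T', k', s', i', j'⟩ h
    dsimp only at h
    obtain ⟨rfl, h⟩ := Sigma.mk.inj_iff.1 h
    rw [heq_eq_eq] at h
    obtain ⟨rfl, h⟩ := Sigma.mk.inj_iff.1 h
    rw [heq_eq_eq] at h
    obtain ⟨h1, h2⟩ := Prod.mk.inj h
    obtain ⟨h3, h4⟩ := Prod.mk.inj h1
    subst h2; subst h3; subst h4
    rfl
  exact hf.countable

/-- The extension of `j0` to all of ℕ. -/
def jExt (ι : UIdx) : ℕ → Fin (ι.k+1) :=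
  fun n => if h : n ∈ ι.T then ι.j0 ⟨n, h⟩ else 0

/-- Hypothesis: `T` is closed under `p` and `j0` embeds `(T,p)` into the finite
lattice `(Fin (k+1), sB, iB)`. -/
def UHyp (ι : UIdx) (p : 𝒩) : Prop :=
  Function.Injective ι.j0 ∧ identsOn ι.sB ι.iB ∧
  (∀ ab : {x // x ∈ ι.T} × {x // x ∈ ι.T},
    (p.1 ab.1 ab.2 ∈ ι.T ∧ p.2 ab.1 ab.2 ∈ ι.T) ∧
    jExt ι (p.1 ab.1 ab.2) = ι.sB (ι.j0 ab.1) (ι.j0 ab.2) ∧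
    jExt ι (p.2 ab.1 ab.2) = ι.iB (ι.j0 ab.1) (ι.j0 ab.2))

/-- Conclusion: the finite lattice `(Fin (k+1), sB, iB)` embeds into `(ℕ, p)`
extending the position of `T`. -/
def UConc (ι : UIdx) (p : 𝒩) : Prop :=
  ∃ e : Fin (ι.k+1) → ℕ, Function.Injective e ∧
    (∀ xy : Fin (ι.k+1) × Fin (ι.k+1),
      e (ι.sB xy.1 xy.2) = p.1 (e xy.1) (e xy.2) ∧
      e (ι.iB xy.1 xy.2) = p.2 (e xy.1) (e xy.2)) ∧
    (∀ t ∈ ι.T, e (jExt ι t) = t)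

def ultraSet (ι : UIdx) : Set ↥LatStr := {p | UHyp ι p.val → UConc ι p.val}

lemma isOpen_locSet (S : Finset ℕ) : IsOpen (locSet S) := by
  have : locSet S = Subtype.val ⁻¹'
      (⋃ (T : Finset ℕ) (_ : S ⊆ T),
        {p : 𝒩 | ∀ ab : {x // x ∈ T} × {x // x ∈ T},
          p.1 ab.1 ab.2 ∈ T ∧ p.2 ab.1 ab.2 ∈ T}) := by
    ext p
    simp only [locSet, Set.mem_setOf_eq, Set.mem_preimage, Set.mem_iUnion]
    constructor
    · rintro ⟨T, h1, h2⟩; exact ⟨T, h1, h2⟩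
    · rintro ⟨T, h1, h2⟩; exact ⟨T, h1, h2⟩
  rw [this]
  refine IsOpen.preimage continuous_subtype_val (isOpen_iUnion fun T => isOpen_iUnion fun _ => ?_)
  have := clopen_factor (γ := ({x // x ∈ T} × {x // x ∈ T}) ⊕ ({x // x ∈ T} × {x // x ∈ T}))
    (fun g p => Sum.rec (fun ab => p.1 ab.1 ab.2) (fun ab => p.2 ab.1 ab.2) g)
    (fun g => by cases g with
      | inl ab => exact continuous_ev1 ab.1 ab.2
      | inr ab => exact continuous_ev2 ab.1 ab.2)
    (fun f => ∀ ab : {x // x ∈ T} × {x // x ∈ T}, f (Sum.inl ab) ∈ T ∧ f (Sum.inr ab) ∈ T)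
  exact this.1

lemma isClosed_UHyp (ι : UIdx) : IsClosed {p : 𝒩 | UHyp ι p} := by
  have := clopen_factor
    (γ := ({x // x ∈ ι.T} × {x // x ∈ ι.T}) ⊕ ({x // x ∈ ι.T} × {x // x ∈ ι.T}))
    (fun g p => Sum.rec (fun ab => p.1 ab.1 ab.2) (fun ab => p.2 ab.1 ab.2) g)
    (fun g => by cases g with
      | inl ab => exact continuous_ev1 ab.1 ab.2
      | inr ab => exact continuous_ev2 ab.1 ab.2)
    (fun f => Function.Injective ι.j0 ∧ identsOn ι.sB ι.iB ∧
      ∀ ab : {x // x ∈ ι.T} × {x // x ∈ ι.T},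
        (f (Sum.inl ab) ∈ ι.T ∧ f (Sum.inr ab) ∈ ι.T) ∧
        jExt ι (f (Sum.inl ab)) = ι.sB (ι.j0 ab.1) (ι.j0 ab.2) ∧
        jExt ι (f (Sum.inr ab)) = ι.iB (ι.j0 ab.1) (ι.j0 ab.2))
  exact this.2

lemma isOpen_UConc (ι : UIdx) : IsOpen {p : 𝒩 | UConc ι p} := by
  have : {p : 𝒩 | UConc ι p} = ⋃ e : Fin (ι.k+1) → ℕ,
      {p : 𝒩 | Function.Injective e ∧
        (∀ xy : Fin (ι.k+1) × Fin (ι.k+1),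
          e (ι.sB xy.1 xy.2) = p.1 (e xy.1) (e xy.2) ∧
          e (ι.iB xy.1 xy.2) = p.2 (e xy.1) (e xy.2)) ∧
        (∀ t ∈ ι.T, e (jExt ι t) = t)} := by
    ext p
    simp only [UConc, Set.mem_setOf_eq, Set.mem_iUnion]
  rw [this]
  refine isOpen_iUnion fun e => ?_
  have := clopen_factor
    (γ := (Fin (ι.k+1) × Fin (ι.k+1)) ⊕ (Fin (ι.k+1) × Fin (ι.k+1)))
    (fun g p => Sum.rec (fun xy => p.1 (e xy.1) (e xy.2)) (fun xy => p.2 (e xy.1) (e xy.2)) g)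
    (fun g => by cases g with
      | inl xy => exact continuous_ev1 (e xy.1) (e xy.2)
      | inr xy => exact continuous_ev2 (e xy.1) (e xy.2))
    (fun f => Function.Injective e ∧
      (∀ xy : Fin (ι.k+1) × Fin (ι.k+1),
        e (ι.sB xy.1 xy.2) = f (Sum.inl xy) ∧ e (ι.iB xy.1 xy.2) = f (Sum.inr xy)) ∧
      (∀ t ∈ ι.T, e (jExt ι t) = t))
  exact this.1

lemma isOpen_ultraSet (ι : UIdx) : IsOpen (ultraSet ι) := by
  have : ultraSet ι = Subtype.val ⁻¹' ({p : 𝒩 | UHyp ι p}ᶜ ∪ {p : 𝒩 | UConc ι p}) := by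
    ext p
    simp only [ultraSet, Set.mem_setOf_eq, Set.mem_preimage, Set.mem_union, Set.mem_compl_iff]
    constructor
    · intro h
      by_cases hh : UHyp ι p.val
      · exact Or.inr (h hh)
      · exact Or.inl hh
    · rintro (h | h) hh
      · exact absurd hh h
      · exact h
  rw [this]
  exact IsOpen.preimage continuous_subtype_val
    ((isClosed_UHyp ι).isOpen_compl.union (isOpen_UConc ι))

end GenericSets

section Density

lemma dense_locSet (S : Finset ℕ) : Dense (locSet S) := by
  classical
  rw [dense_iff_inter_open]
  rintro U hU ⟨q, hqU⟩
  obtain ⟨O, hO, rfl⟩ := isOpen_induced_iff.1 hU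
  have hqO : q.val ∈ O := hqU
  obtain ⟨F, hF⟩ := nbhd_basis hO hqO
  set X : Finset ℕ := S ∪ F.biUnion
    (fun ab => {ab.1, ab.2, q.val.1 ab.1 ab.2, q.val.2 ab.1 ab.2}) with hX
  have hmem : ∀ ab ∈ F, ab.1 ∈ X ∧ ab.2 ∈ X ∧
      q.val.1 ab.1 ab.2 ∈ X ∧ q.val.2 ab.1 ab.2 ∈ X := by
    intro ab hab
    refine ⟨?_, ?_, ?_, ?_⟩ <;>
      exact Finset.mem_union_right _ (Finset.mem_biUnion.2 ⟨ab, hab, by simp⟩)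
  obtain ⟨K, hKfin, hXK, hKi, hKs⟩ := FEP q.property X
  obtain ⟨hlat, htrans, hclosed⟩ := Glue.main K id (Function.injective_id.injOn)
  set p : 𝒩 := (gluS K id, gluI K id) with hp
  have hagree : ∀ a ∈ X, ∀ b ∈ X,
      p.1 a b = K.s a b ∧ p.2 a b = K.i a b := by
    intro a ha b hb
    have := htrans a (hXK (Finset.mem_coe.2 ha)) b (hXK (Finset.mem_coe.2 hb))
    simpa using this
  refine ⟨⟨p, hlat⟩, ?_, ?_⟩
  · show p ∈ O
    refine hF p ?_
    intro ab hab
    obtain ⟨h1, h2, h3, h4⟩ := hmem ab hab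
    obtain ⟨e1, e2⟩ := hagree _ h1 _ h2
    constructor
    · rw [e1]
      exact hKs _ h1 _ h2 h3
    · rw [e2]
      exact hKi _ h1 _ h2
  · refine ⟨hKfin.toFinset, ?_, ?_⟩
    · intro x hx
      exact hKfin.mem_toFinset.2 (hXK (Finset.mem_coe.2 (Finset.mem_union_left _ hx)))
    · rintro ⟨⟨a, ha⟩, ⟨b, hb⟩⟩
      have ha' : a ∈ K.C := hKfin.mem_toFinset.1 ha
      have hb' : b ∈ K.C := hKfin.mem_toFinset.1 hb
      have := htrans a ha' b hb'
      simp only [id] at this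
      constructor
      · show p.1 a b ∈ hKfin.toFinset
        have e : p.1 a b = K.s a b := by simpa using this.1
        rw [e]
        exact hKfin.mem_toFinset.2 (K.s_mem _ ha' _ hb')
      · show p.2 a b ∈ hKfin.toFinset
        have e : p.2 a b = K.i a b := by simpa using this.2
        rw [e]
        exact hKfin.mem_toFinset.2 (K.i_mem _ ha' _ hb')

lemma jExt_mem (ι : UIdx) {t : ℕ} (ht : t ∈ ι.T) : jExt ι t = ι.j0 ⟨t, ht⟩ := dif_pos ht

lemma dense_ultraSet (ι : UIdx) : Dense (ultraSet ι) := by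
  classical
  rw [dense_iff_inter_open]
  rintro U hU ⟨q, hqU⟩
  obtain ⟨O, hO, rfl⟩ := isOpen_induced_iff.1 hU
  have hqO : q.val ∈ O := hqU
  by_cases hHyp : UHyp ι q.val
  case neg => exact ⟨q, hqU, fun h => absurd h hHyp⟩
  obtain ⟨hj0inj, hidents, hTh⟩ := hHyp
  obtain ⟨F, hF⟩ := nbhd_basis hO hqO
  set X : Finset ℕ := ι.T ∪ F.biUnion
    (fun ab => {ab.1, ab.2, q.val.1 ab.1 ab.2, q.val.2 ab.1 ab.2}) with hX
  have hmem : ∀ ab ∈ F, ab.1 ∈ X ∧ ab.2 ∈ X ∧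
      q.val.1 ab.1 ab.2 ∈ X ∧ q.val.2 ab.1 ab.2 ∈ X := by
    intro ab hab
    refine ⟨?_, ?_, ?_, ?_⟩ <;>
      exact Finset.mem_union_right _ (Finset.mem_biUnion.2 ⟨ab, hab, by simp⟩)
  have hTX : ∀ t ∈ ι.T, t ∈ X := fun t ht => Finset.mem_union_left _ ht
  obtain ⟨K, hKfin, hXK, hKi, hKs⟩ := FEP q.property X
  -- the finite lattice B
  set B : PL (Fin (ι.k+1)) := PL.ofIdent Set.univ ι.sB ι.iB
    (fun _ _ _ _ => trivial) (fun _ _ _ _ => trivial)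
    (fun a _ b _ => hidents.1 a b) (fun a _ b _ c _ => hidents.2.1 a b c)
    (fun a _ b _ => hidents.2.2.1 a b) (fun a _ b _ c _ => hidents.2.2.2.1 a b c)
    (fun a _ b _ => hidents.2.2.2.2.1 a b) (fun a _ b _ => hidents.2.2.2.2.2 a b)
    with hB
  have hBC : B.C = Set.univ := rfl
  have hBs : B.s = ι.sB := rfl
  have hBi : B.i = ι.iB := rfl
  -- `T` sits inside `K` as a sublattice, compatibly with `q`
  have hTK : (↑ι.T : Set ℕ) ⊆ K.C := fun t ht => hXK (Finset.mem_coe.2 (hTX t (Finset.mem_coe.1 ht)))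
  have hKsT : ∀ a ∈ ι.T, ∀ b ∈ ι.T, K.s a b = q.val.1 a b ∧ K.s a b ∈ ι.T := by
    intro a ha b hb
    have hcl := (hTh (⟨a, ha⟩, ⟨b, hb⟩)).1.1
    have := hKs a (hTX a ha) b (hTX b hb) (hTX _ hcl)
    exact ⟨this, this ▸ hcl⟩
  have hKiT : ∀ a ∈ ι.T, ∀ b ∈ ι.T, K.i a b = q.val.2 a b ∧ K.i a b ∈ ι.T := by
    intro a ha b hb
    have hcl := (hTh (⟨a, ha⟩, ⟨b, hb⟩)).1.2
    have := hKi a (hTX a ha) b (hTX b hb)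
    exact ⟨this, this ▸ hcl⟩
  have hTs : ∀ a ∈ (↑ι.T : Set ℕ), ∀ b ∈ (↑ι.T : Set ℕ), K.s a b ∈ (↑ι.T : Set ℕ) := by
    intro a ha b hb
    exact Finset.mem_coe.2 (hKsT a (Finset.mem_coe.1 ha) b (Finset.mem_coe.1 hb)).2
  have hTi : ∀ a ∈ (↑ι.T : Set ℕ), ∀ b ∈ (↑ι.T : Set ℕ), K.i a b ∈ (↑ι.T : Set ℕ) := by
    intro a ha b hb
    exact Finset.mem_coe.2 (hKiT a (Finset.mem_coe.1 ha) b (Finset.mem_coe.1 hb)).2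
  have hjinj : Set.InjOn (jExt ι) ↑ι.T := by
    intro a ha b hb h
    have ha' := Finset.mem_coe.1 ha
    have hb' := Finset.mem_coe.1 hb
    rw [jExt_mem ι ha', jExt_mem ι hb'] at h
    have := hj0inj h
    exact congrArg Subtype.val this
  have hjs : ∀ a ∈ (↑ι.T : Set ℕ), ∀ b ∈ (↑ι.T : Set ℕ),
      jExt ι (K.s a b) = B.s (jExt ι a) (jExt ι b) := by
    intro a ha b hb
    have ha' := Finset.mem_coe.1 ha
    have hb' := Finset.mem_coe.1 hb
    rw [(hKsT a ha' b hb').1, hBs, jExt_mem ι ha', jExt_mem ι hb']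
    exact (hTh (⟨a, ha'⟩, ⟨b, hb'⟩)).2.1
  have hji : ∀ a ∈ (↑ι.T : Set ℕ), ∀ b ∈ (↑ι.T : Set ℕ),
      jExt ι (K.i a b) = B.i (jExt ι a) (jExt ι b) := by
    intro a ha b hb
    have ha' := Finset.mem_coe.1 ha
    have hb' := Finset.mem_coe.1 hb
    rw [(hKiT a ha' b hb').1, hBi, jExt_mem ι ha', jExt_mem ι hb']
    exact (hTh (⟨a, ha'⟩, ⟨b, hb'⟩)).2.2
  obtain ⟨M, φ, ψ, hMfin, hφinj, hψinj, hφmem, hψmem, hφhom, hψhom, hψφ⟩ :=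
    amalgam K B hKfin ↑ι.T hTK hBC hTs hTi (jExt ι) hjinj hjs hji
  -- place M inside ℕ extending the positions of K
  set v : Set ℕ → ℕ := fun c => if h : ∃ x ∈ K.C, φ x = c then h.choose else 0 with hv
  have hvφ : ∀ x ∈ K.C, v (φ x) = x := by
    intro x hx
    have h : ∃ x' ∈ K.C, φ x' = φ x := ⟨x, hx, rfl⟩
    simp only [hv, dif_pos h]
    exact hφinj h.choose_spec.1 hx h.choose_spec.2
  have hvinj : Set.InjOn v (φ '' K.C) := by
    rintro _ ⟨x, hx, rfl⟩ _ ⟨y, hy, rfl⟩ h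
    rw [hvφ x hx, hvφ y hy] at h
    rw [h]
  obtain ⟨u, huinj, huD⟩ := inj_extend M.C hMfin (φ '' K.C)
    (by rintro _ ⟨x, hx, rfl⟩; exact hφmem x hx) v hvinj
  have hu : ∀ x ∈ K.C, u (φ x) = x := by
    intro x hx
    rw [huD _ ⟨x, hx, rfl⟩, hvφ x hx]
  obtain ⟨hlat, htrans, hclosed⟩ := Glue.main M u huinj
  set p : 𝒩 := (gluS M u, gluI M u) with hp
  have hagree : ∀ a ∈ X, ∀ b ∈ X,
      p.1 a b = K.s a b ∧ p.2 a b = K.i a b := by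
    intro a ha b hb
    have haK : a ∈ K.C := hXK (Finset.mem_coe.2 ha)
    have hbK : b ∈ K.C := hXK (Finset.mem_coe.2 hb)
    have htr := htrans (φ a) (hφmem a haK) (φ b) (hφmem b hbK)
    have e1 : p.1 a b = u (M.s (φ a) (φ b)) := by
      calc p.1 a b = p.1 (u (φ a)) (u (φ b)) := by rw [hu a haK, hu b hbK]
      _ = u (M.s (φ a) (φ b)) := htr.1
    have e2 : p.2 a b = u (M.i (φ a) (φ b)) := by
      calc p.2 a b = p.2 (u (φ a)) (u (φ b)) := by rw [hu a haK, hu b hbK]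
      _ = u (M.i (φ a) (φ b)) := htr.2
    constructor
    · rw [e1, ← (hφhom a haK b hbK).1, hu _ (K.s_mem _ haK _ hbK)]
    · rw [e2, ← (hφhom a haK b hbK).2, hu _ (K.i_mem _ haK _ hbK)]
  refine ⟨⟨p, hlat⟩, ?_, ?_⟩
  · show p ∈ O
    refine hF p ?_
    intro ab hab
    obtain ⟨h1, h2, h3, h4⟩ := hmem ab hab
    obtain ⟨e1, e2⟩ := hagree _ h1 _ h2
    constructor
    · rw [e1]; exact hKs _ h1 _ h2 h3
    · rw [e2]; exact hKi _ h1 _ h2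
  · -- p realizes the conclusion
    intro _
    refine ⟨fun x => u (ψ x), ?_, ?_, ?_⟩
    · intro x y h
      exact hψinj (huinj (hψmem x) (hψmem y) h)
    · intro xy
      have htr := htrans (ψ xy.1) (hψmem xy.1) (ψ xy.2) (hψmem xy.2)
      constructor
      · show u (ψ (ι.sB xy.1 xy.2)) = gluS M u (u (ψ xy.1)) (u (ψ xy.2))
        rw [show ι.sB xy.1 xy.2 = B.s xy.1 xy.2 from rfl, (hψhom xy.1 xy.2).1, htr.1]
      · show u (ψ (ι.iB xy.1 xy.2)) = gluI M u (u (ψ xy.1)) (u (ψ xy.2))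
        rw [show ι.iB xy.1 xy.2 = B.i xy.1 xy.2 from rfl, (hψhom xy.1 xy.2).2, htr.2]
    · intro t ht
      show u (ψ (jExt ι t)) = t
      rw [hψφ t (Finset.mem_coe.2 ht), hu t (hTK (Finset.mem_coe.2 ht))]

end Density

section Soundness

instance : Lattice Empty where
  le := fun _ _ => True
  sup := fun a _ => a
  inf := fun a _ => a
  le_refl := fun a => a.elim
  le_trans := fun a => a.elim
  le_antisymm := fun a => a.elim
  le_sup_left := fun a => a.elim
  le_sup_right := fun a => a.elim
  sup_le := fun a => a.elim
  inf_le_left := fun a => a.elim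
  inf_le_right := fun a => a.elim
  le_inf := fun a => a.elim
  lt_iff_le_not_ge := fun a => a.elim

lemma sound_loc (p : ↥LatStr) (h : ∀ S : Finset ℕ, p ∈ locSet S) : LocFinStr p.val := by
  intro S
  obtain ⟨T, hST, hcl⟩ := h S
  exact ⟨T, hST, fun a ha b hb => hcl (⟨a, ha⟩, ⟨b, hb⟩)⟩

lemma sound_ultra (p : ↥LatStr) (h : ∀ ι : UIdx, p ∈ ultraSet ι) : UltraStr p.val := by
  classical
  intro A B _ _ _ _ j e hj he
  cases isEmpty_or_nonempty B with
  | inl hB =>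
    have hA : IsEmpty A := ⟨fun a => (hB.false (j a)).elim⟩
    refine ⟨fun b => (hB.false b).elim,
      ⟨fun {x} => (hB.false x).elim, fun x => (hB.false x).elim⟩, ?_⟩
    funext a
    exact (hA.false a).elim
  | inr hB =>
    obtain ⟨k, hk⟩ : ∃ k, Fintype.card B = k + 1 := by
      have := Fintype.card_pos_iff.2 hB
      exact ⟨Fintype.card B - 1, by omega⟩
    set ιe : B ≃ Fin (k+1) := Fintype.equivFinOfCardEq hk with hιe
    set T : Finset ℕ := Finset.image e Finset.univ with hT
    have hmemT : ∀ t : {x // x ∈ T}, ∃ a : A, e a = ↑t := by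
      intro t
      obtain ⟨a, _, ha⟩ := Finset.mem_image.1 t.2
      exact ⟨a, ha⟩
    set invE : {x // x ∈ T} → A := fun t => (hmemT t).choose with hinvEdef
    have hinvE : ∀ t, e (invE t) = ↑t := fun t => (hmemT t).choose_spec
    have hET : ∀ a : A, e a ∈ T := fun a => Finset.mem_image.2 ⟨a, Finset.mem_univ a, rfl⟩
    have hEinv : ∀ a : A, invE ⟨e a, hET a⟩ = a := by
      intro a
      apply he.1
      rw [hinvE]
    set sB : Fin (k+1) → Fin (k+1) → Fin (k+1) := fun x y => ιe (ιe.symm x ⊔ ιe.symm y)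
      with hsB
    set iB : Fin (k+1) → Fin (k+1) → Fin (k+1) := fun x y => ιe (ιe.symm x ⊓ ιe.symm y)
      with hiB
    set idx : UIdx := ⟨T, k, sB, iB, fun t => ιe (j (invE t))⟩ with hidx
    have hyp : UHyp idx p.val := by
      refine ⟨?_, ?_, ?_⟩
      · intro t t' hh
        have h1 : invE t = invE t' := hj.1 (ιe.injective hh)
        have h2 : (t : ℕ) = ↑t' := by rw [← hinvE t, ← hinvE t', h1]
        exact Subtype.ext h2
      · refine ⟨?_, ?_, ?_, ?_, ?_, ?_⟩
        · intro a b; simp [idx, hsB, sup_comm]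
        · intro a b c; simp [idx, hsB, Equiv.symm_apply_apply, sup_assoc]
        · intro a b; simp [idx, hiB, inf_comm]
        · intro a b c; simp [idx, hiB, Equiv.symm_apply_apply, inf_assoc]
        · intro a b; simp [idx, hsB, hiB, Equiv.symm_apply_apply, sup_inf_self]
        · intro a b; simp [idx, hsB, hiB, Equiv.symm_apply_apply, inf_sup_self]
      · rintro ⟨⟨a, ha⟩, ⟨b, hb⟩⟩
        set x : A := invE ⟨a, ha⟩ with hx
        set y : A := invE ⟨b, hb⟩ with hy
        have hax : a = e x := (hinvE ⟨a, ha⟩).symm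
        have hby : b = e y := (hinvE ⟨b, hb⟩).symm
        have hp1 : p.val.1 a b = e (x ⊔ y) := by
          rw [hax, hby, (he.2 x y).1]
        have hp2 : p.val.2 a b = e (x ⊓ y) := by
          rw [hax, hby, (he.2 x y).2]
        have hj0 : ∀ (z : A) (hz : e z ∈ T), idx.j0 ⟨e z, hz⟩ = ιe (j z) := by
          intro z hz
          show ιe (j (invE ⟨e z, hz⟩)) = ιe (j z)
          rw [hEinv z]
        refine ⟨⟨?_, ?_⟩, ?_, ?_⟩
        · rw [hp1]; exact hET _
        · rw [hp2]; exact hET _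
        · rw [hp1, jExt_mem idx (hET (x ⊔ y)), hj0 _ (hET _)]
          have : idx.j0 ⟨a, ha⟩ = ιe (j x) := by
            have := hj0 x (hax ▸ ha)
            convert this using 2
            exact Subtype.ext hax
          rw [this]
          have : idx.j0 ⟨b, hb⟩ = ιe (j y) := by
            have := hj0 y (hby ▸ hb)
            convert this using 2
            exact Subtype.ext hby
          rw [this]
          show ιe (j (x ⊔ y)) = sB (ιe (j x)) (ιe (j y))
          rw [(hj.2 x y).1]
          simp [hsB, Equiv.symm_apply_apply]
        · rw [hp2, jExt_mem idx (hET (x ⊓ y)), hj0 _ (hET _)]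
          have h1 : idx.j0 ⟨a, ha⟩ = ιe (j x) := by
            have := hj0 x (hax ▸ ha)
            convert this using 2
            exact Subtype.ext hax
          have h2 : idx.j0 ⟨b, hb⟩ = ιe (j y) := by
            have := hj0 y (hby ▸ hb)
            convert this using 2
            exact Subtype.ext hby
          rw [h1, h2]
          show ιe (j (x ⊓ y)) = iB (ιe (j x)) (ιe (j y))
          rw [(hj.2 x y).2]
          simp [hiB, Equiv.symm_apply_apply]
    obtain ⟨e', he'inj, he'ops, he'T⟩ := h idx hyp
    refine ⟨e' ∘ ιe, ⟨he'inj.comp ιe.injective, ?_⟩, ?_⟩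
    · intro a b
      constructor
      · have h1 := (he'ops (ιe a, ιe b)).1
        have hsb : idx.sB (ιe a) (ιe b) = ιe (a ⊔ b) := by
          show sB (ιe a) (ιe b) = ιe (a ⊔ b)
          simp [hsB, Equiv.symm_apply_apply]
        rw [hsb] at h1
        exact h1
      · have h1 := (he'ops (ιe a, ιe b)).2
        have hib : idx.iB (ιe a) (ιe b) = ιe (a ⊓ b) := by
          show iB (ιe a) (ιe b) = ιe (a ⊓ b)
          simp [hiB, Equiv.symm_apply_apply]
        rw [hib] at h1
        exact h1
    · funext a
      show e' (ιe (j a)) = e a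
      have h1 : ιe (j a) = idx.j0 ⟨e a, hET a⟩ := by
        show _ = ιe (j (invE ⟨e a, hET a⟩))
        rw [hEinv]
      have h2 := he'T (e a) (hET a)
      rw [jExt_mem idx (hET a)] at h2
      rw [h1]
      exact h2

lemma sound_univ (p : ↥LatStr) (hu : UltraStr p.val) : UnivStr p.val := by
  intro A _ _
  obtain ⟨e', he', _⟩ := hu Empty A (fun a => a.elim) (fun a => a.elim)
    ⟨fun {x} => x.elim, fun x => x.elim⟩ ⟨fun {x} => x.elim, fun x => x.elim⟩
  exact ⟨e', he'⟩

end Soundness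

/-- The set of lattice structures on `ℕ` that are locally finite, universal for finite
lattices, and ultrahomogeneous for finite lattices is comeager in `LatStr`. -/
theorem locFin_univ_ultra_comeager :
    {p : LatStr | LocFinStr p.1 ∧ UnivStr p.1 ∧ UltraStr p.1} ∈ residual LatStr := by
  have h1 : (⋂ S : Finset ℕ, locSet S) ∈ residual ↥LatStr :=
    countable_iInter_mem.2 fun S => residual_of_dense_open (isOpen_locSet S) (dense_locSet S)
  have h2 : (⋂ ι : UIdx, ultraSet ι) ∈ residual ↥LatStr :=
    countable_iInter_mem.2 fun ι => residual_of_dense_open (isOpen_ultraSet ι) (dense_ultraSet ι)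
  refine Filter.mem_of_superset (Filter.inter_mem h1 h2) ?_
  rintro p ⟨hp1, hp2⟩
  simp only [Set.mem_iInter] at hp1 hp2
  have hloc : LocFinStr p.val := sound_loc p hp1
  have hult : UltraStr p.val := sound_ultra p hp2
  exact ⟨hloc, sound_univ p hult, hult⟩
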